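/- arXiv:1807.00503 — 3 statements merged into one kernel-verified Lean document; each statement's English description precedes it below -/
import Mathlib

section
/- For z = α + iβ with -1 ≤ α ≤ 1 and β > 0, the function F(0, z) = ∫_{-1}^{1} dx / (x^2 - z^2) satisfies F(0,z) = (1/(2z)) · (log((z-1)/(z+1)) - log((z+1)/(z-1))), and in particular z · F(0, z) → iπ as z → 0 along such values. -/
open MeasureTheory Filter

/-- `F(0, z) = ∫₋₁¹ dx / (x² - z²)`. -/
noncomputable def F0 (z : ℂ) : ℂ := ∫ x in (-1 : ℝ)..1, ((x : ℂ) ^ 2 - z ^ 2)⁻¹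

lemma log_div_im_pos {a b : ℂ} (ha : 0 < a.im) (hb : 0 < b.im) :
    Complex.log (a / b) = Complex.log a - Complex.log b := by
  have ha0 : a ≠ 0 := by intro h; simp [h] at ha
  have hb0 : b ≠ 0 := by intro h; simp [h] at hb
  have hargb : Complex.arg b ≠ Real.pi :=
    (Complex.arg_lt_pi_iff.2 (Or.inr hb.ne')).ne
  have hbi : (b⁻¹ : ℂ) ≠ 0 := inv_ne_zero hb0
  rw [div_eq_mul_inv, Complex.log_mul ha0 hbi, Complex.log_inv b hargb,
    sub_eq_add_neg]
  rw [Complex.arg_inv, if_neg hargb]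
  constructor
  · have h1 : 0 ≤ Complex.arg a := Complex.arg_nonneg_iff.2 ha.le
    have h2 : Complex.arg b < Real.pi := Complex.arg_lt_pi_iff.2 (Or.inr hb.ne')
    linarith
  · have h1 : Complex.arg a ≤ Real.pi := Complex.arg_le_pi a
    have h2 : 0 ≤ Complex.arg b := Complex.arg_nonneg_iff.2 hb.le
    linarith

lemma log_neg_im_pos {w : ℂ} (hw : 0 < w.im) :
    Complex.log (-w) = Complex.log w - Real.pi * Complex.I := by
  rw [Complex.log, Complex.log, norm_neg,
    Complex.arg_neg_eq_arg_sub_pi_of_im_pos hw]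
  push_cast
  ring

lemma sq_sub_sq_ne {z : ℂ} (hz : 0 < z.im) (x : ℝ) : ((x : ℂ) ^ 2 - z ^ 2) ≠ 0 := by
  intro h
  have h2 : ((x : ℂ) - z) * ((x : ℂ) + z) = 0 := by rw [← h]; ring
  rcases mul_eq_zero.1 h2 with h3 | h3
  · have h4 : ((x : ℂ) - z).im = 0 := by rw [h3]; rfl
    simp [Complex.sub_im] at h4; linarith
  · have h4 : ((x : ℂ) + z).im = 0 := by rw [h3]; rfl
    simp [Complex.add_im] at h4; linarith

lemma F0_eq {z : ℂ} (hz : 0 < z.im) :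
    F0 z = z⁻¹ * (Complex.log (z - 1) - Complex.log (z + 1)) := by
  have hz0 : z ≠ 0 := by intro h; simp [h] at hz
  set g : ℝ → ℂ := fun x => (2 * z)⁻¹ * (Complex.log ((x : ℂ) - z) - Complex.log ((x : ℂ) + z))
  have hderiv : ∀ x ∈ Set.uIcc (-1 : ℝ) 1, HasDerivAt g (((x : ℂ) ^ 2 - z ^ 2)⁻¹) x := by
    intro x _
    have hsub : ((x : ℂ) - z) ≠ 0 := by
      intro h
      have : ((x : ℂ) - z).im = 0 := by rw [h]; rfl
      simp at this; linarith
    have hadd : ((x : ℂ) + z) ≠ 0 := by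
      intro h
      have : ((x : ℂ) + z).im = 0 := by rw [h]; rfl
      simp at this; linarith
    have hs1 : ((x : ℂ) - z) ∈ Complex.slitPlane := Or.inr (by simp [Complex.sub_im]; linarith)
    have hs2 : ((x : ℂ) + z) ∈ Complex.slitPlane := Or.inr (by simp [Complex.add_im]; linarith)
    have d1 : HasDerivAt (fun w : ℂ => Complex.log (w - z)) ((x : ℂ) - z)⁻¹ (x : ℂ) := by
      simpa [Function.comp_def] using (Complex.hasDerivAt_log hs1).comp (x : ℂ) ((hasDerivAt_id (x : ℂ)).sub_const z)
    have d2 : HasDerivAt (fun w : ℂ => Complex.log (w + z)) ((x : ℂ) + z)⁻¹ (x : ℂ) := by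
      simpa [Function.comp_def] using (Complex.hasDerivAt_log hs2).comp (x : ℂ) ((hasDerivAt_id (x : ℂ)).add_const z)
    have d3 : HasDerivAt (fun w : ℂ => (2 * z)⁻¹ * (Complex.log (w - z) - Complex.log (w + z)))
        ((2 * z)⁻¹ * (((x : ℂ) - z)⁻¹ - ((x : ℂ) + z)⁻¹)) (x : ℂ) :=
      ((d1.sub d2).const_mul _)
    have d4 := d3.comp_ofReal
    convert d4 using 1
    have h2z : (2 : ℂ) * z ≠ 0 := by simp [hz0]
    have hne := sq_sub_sq_ne hz x
    field_simp
    ring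
  have hint : IntervalIntegrable (fun x : ℝ => ((x : ℂ) ^ 2 - z ^ 2)⁻¹) volume (-1) 1 := by
    apply Continuous.intervalIntegrable
    exact ((Complex.continuous_ofReal.pow 2).sub continuous_const).inv₀ (fun x => sq_sub_sq_ne hz x)
  have key := intervalIntegral.integral_eq_sub_of_hasDerivAt hderiv hint
  rw [F0, key]
  have him1 : 0 < (z - 1).im := by simp [Complex.sub_im]; exact hz
  have him2 : 0 < (z + 1).im := by simp [Complex.add_im]; exact hz
  have e1 : ((1 : ℝ) : ℂ) - z = -(z - 1) := by push_cast; ring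
  have e2 : ((-1 : ℝ) : ℂ) - z = -(z + 1) := by push_cast; ring
  have e3 : ((1 : ℝ) : ℂ) + z = z + 1 := by push_cast; ring
  have e4 : ((-1 : ℝ) : ℂ) + z = z - 1 := by push_cast; ring
  simp only [g, e1, e2, e3, e4, log_neg_im_pos him1, log_neg_im_pos him2]
  have h2z : (2 : ℂ) * z ≠ 0 := by simp [hz0]
  field_simp
  ring

/-- For `z = α + iβ` with `-1 ≤ α ≤ 1`, `β > 0`, we have
`F(0,z) = (1/(2z)) (log((z-1)/(z+1)) - log((z+1)/(z-1)))`; and `z·F(0,z) → iπ`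
as `z → 0` through such values. -/
theorem stmt_1 :
    (∀ z : ℂ, -1 ≤ z.re → z.re ≤ 1 → 0 < z.im →
      F0 z = 1 / (2 * z) *
        (Complex.log ((z - 1) / (z + 1)) - Complex.log ((z + 1) / (z - 1)))) ∧
    Tendsto (fun z : ℂ => z * F0 z)
      (nhdsWithin 0 {z : ℂ | -1 ≤ z.re ∧ z.re ≤ 1 ∧ 0 < z.im})
      (nhds ((Real.pi : ℂ) * Complex.I)) := by
  have main : ∀ z : ℂ, 0 < z.im →
      F0 z = 1 / (2 * z) *
        (Complex.log ((z - 1) / (z + 1)) - Complex.log ((z + 1) / (z - 1))) := by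
    intro z hz
    have hz0 : z ≠ 0 := by intro h; simp [h] at hz
    have him1 : 0 < (z - 1).im := by simp [Complex.sub_im]; exact hz
    have him2 : 0 < (z + 1).im := by simp [Complex.add_im]; exact hz
    rw [F0_eq hz, log_div_im_pos him1 him2, log_div_im_pos him2 him1]
    field_simp
    ring
  refine ⟨fun z _ _ hz => main z hz, ?_⟩
  set S : Set ℂ := {z : ℂ | -1 ≤ z.re ∧ z.re ≤ 1 ∧ 0 < z.im}
  have heq : ∀ᶠ z in nhdsWithin 0 S,
      z * F0 z = Complex.log (z - 1) - Complex.log (z + 1) := by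
    filter_upwards [self_mem_nhdsWithin] with z hzS
    have hz : 0 < z.im := hzS.2.2
    have hz0 : z ≠ 0 := by intro h; simp [h] at hz
    rw [F0_eq hz]
    field_simp
  rw [tendsto_congr' heq]
  have t1 : Tendsto (fun z : ℂ => Complex.log (z - 1)) (nhdsWithin 0 S)
      (nhds ((Real.pi : ℂ) * Complex.I)) := by
    have hmap : Tendsto (fun z : ℂ => z - 1) (nhdsWithin 0 S)
        (nhdsWithin (-1) {w : ℂ | 0 ≤ w.im}) := by
      apply tendsto_nhdsWithin_of_tendsto_nhds_of_eventually_within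
      · have : Tendsto (fun z : ℂ => z - 1) (nhds 0) (nhds (0 - 1)) :=
          (continuous_id.sub continuous_const).tendsto 0
        simpa using this.mono_left nhdsWithin_le_nhds
      · filter_upwards [self_mem_nhdsWithin] with z hzS
        simp only [Set.mem_setOf_eq, Complex.sub_im, Complex.one_im, sub_zero]
        exact hzS.2.2.le
    have hlog := Complex.tendsto_log_nhdsWithin_im_nonneg_of_re_neg_of_im_zero
      (z := (-1 : ℂ)) (by norm_num) (by norm_num)
    have := hlog.comp hmap
    simpa [Function.comp_def] using this
  have t2 : Tendsto (fun z : ℂ => Complex.log (z + 1)) (nhdsWithin 0 S) (nhds 0) := by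
    have hc : ContinuousAt Complex.log 1 :=
      continuousAt_clog (Or.inl (by norm_num))
    have hmap : Tendsto (fun z : ℂ => z + 1) (nhdsWithin 0 S) (nhds 1) := by
      have : Tendsto (fun z : ℂ => z + 1) (nhds 0) (nhds (0 + 1)) :=
        (continuous_id.add continuous_const).tendsto 0
      simpa using this.mono_left nhdsWithin_le_nhds
    have := hc.tendsto.comp hmap
    simpa [Function.comp_def] using this
  simpa using t1.sub t2
end

section
/- Let m₁, m₂ > 0 and Γ₁, Γ₂ > 0, set Γ± = Γ₁m₁ ± Γ₂m₂ and Δ₂(s) = λ(s, m₁², m₂²) - Γ₋² + 2i[Γ₊ s - Γ₋ (m₁² - m₂²)]. Then Im Δ₂(s) = 0 iff s = s* := (Γ₋/Γ₊)(m₁² - m₂²), and at s = s* one additionally has Re Δ₂(s*) = 0 if and only if 4 m₁² m₂² (m₁² - m₂²)(Γ₂² - Γ₁²) = (m₁² Γ₁² - m₂² Γ₂²)². -/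
/-- The Källén function. -/
def kallen (a b c : ℝ) : ℝ := a ^ 2 + b ^ 2 + c ^ 2 - 2 * a * b - 2 * b * c - 2 * c * a

/-- The complex-mass BST factor of the bubble,
`Δ₂(s) = λ(s, m₁², m₂²) - Γ₂² + 2i[Γ₊ s - Γ₋(m₁² - m₂²)]`. -/
noncomputable def Delta2 (m₁ m₂ Γ₁ Γ₂ s : ℝ) : ℂ :=
  ((kallen s (m₁ ^ 2) (m₂ ^ 2) - (Γ₁ * m₁ - Γ₂ * m₂) ^ 2 : ℝ) : ℂ) +
    2 * Complex.I *
      (((Γ₁ * m₁ + Γ₂ * m₂) * s - (Γ₁ * m₁ - Γ₂ * m₂) * (m₁ ^ 2 - m₂ ^ 2) : ℝ) : ℂ)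

/-- Peierls zeros of the two-point function: `Im Δ₂(s) = 0` iff
`s = s* = (Γ₋/Γ₊)(m₁² - m₂²)`, and `Re Δ₂(s*) = 0` iff
`4 m₁² m₂² (m₁² - m₂²)(Γ₂² - Γ₁²) = (m₁²Γ₁² - m₂²Γ₂²)²`. -/
theorem stmt_7 (m₁ m₂ Γ₁ Γ₂ : ℝ) (hm₁ : 0 < m₁) (hm₂ : 0 < m₂)
    (hΓ₁ : 0 < Γ₁) (hΓ₂ : 0 < Γ₂) :
    (∀ s : ℝ, (Delta2 m₁ m₂ Γ₁ Γ₂ s).im = 0 ↔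
      s = (Γ₁ * m₁ - Γ₂ * m₂) / (Γ₁ * m₁ + Γ₂ * m₂) * (m₁ ^ 2 - m₂ ^ 2)) ∧
    ((Delta2 m₁ m₂ Γ₁ Γ₂
        ((Γ₁ * m₁ - Γ₂ * m₂) / (Γ₁ * m₁ + Γ₂ * m₂) * (m₁ ^ 2 - m₂ ^ 2))).re = 0 ↔
      4 * m₁ ^ 2 * m₂ ^ 2 * (m₁ ^ 2 - m₂ ^ 2) * (Γ₂ ^ 2 - Γ₁ ^ 2) =
        (m₁ ^ 2 * Γ₁ ^ 2 - m₂ ^ 2 * Γ₂ ^ 2) ^ 2) := by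
  have hP : (0:ℝ) < Γ₁ * m₁ + Γ₂ * m₂ := by positivity
  have hP' : Γ₁ * m₁ + Γ₂ * m₂ ≠ 0 := ne_of_gt hP
  constructor
  · intro s
    simp only [Delta2, Complex.add_im, Complex.ofReal_im, Complex.mul_im,
      Complex.mul_re, Complex.I_re, Complex.I_im, Complex.ofReal_re,
      Complex.re_ofNat, Complex.im_ofNat]
    constructor
    · intro h
      field_simp
      nlinarith [h]
    · intro h
      subst h
      field_simp
      ring
  · simp only [Delta2, Complex.add_re, Complex.ofReal_re, Complex.mul_re,
      Complex.mul_im, Complex.I_re, Complex.I_im, Complex.ofReal_im,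
      Complex.re_ofNat, Complex.im_ofNat]
    have key : kallen ((Γ₁ * m₁ - Γ₂ * m₂) / (Γ₁ * m₁ + Γ₂ * m₂) * (m₁ ^ 2 - m₂ ^ 2))
        (m₁ ^ 2) (m₂ ^ 2) - (Γ₁ * m₁ - Γ₂ * m₂) ^ 2 =
        (4 * m₁ ^ 2 * m₂ ^ 2 * (m₁ ^ 2 - m₂ ^ 2) * (Γ₂ ^ 2 - Γ₁ ^ 2) -
          (m₁ ^ 2 * Γ₁ ^ 2 - m₂ ^ 2 * Γ₂ ^ 2) ^ 2) / (Γ₁ * m₁ + Γ₂ * m₂) ^ 2 := by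
      unfold kallen
      field_simp [kallen]
      ring
    norm_num
    constructor
    · intro h
      have h2 : kallen ((Γ₁ * m₁ - Γ₂ * m₂) / (Γ₁ * m₁ + Γ₂ * m₂) * (m₁ ^ 2 - m₂ ^ 2))
          (m₁ ^ 2) (m₂ ^ 2) - (Γ₁ * m₁ - Γ₂ * m₂) ^ 2 = 0 := by linarith
      rw [key, div_eq_zero_iff] at h2
      rcases h2 with h2 | h2
      · linarith
      · exact absurd h2 (by positivity)
    · intro h
      have : kallen ((Γ₁ * m₁ - Γ₂ * m₂) / (Γ₁ * m₁ + Γ₂ * m₂) * (m₁ ^ 2 - m₂ ^ 2))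
          (m₁ ^ 2) (m₂ ^ 2) - (Γ₁ * m₁ - Γ₂ * m₂) ^ 2 = 0 := by
        rw [key, h]; simp
      linarith
end

section
/- Let V(x₁,x₂,x₃) be the quadratic form of a one-loop box with BST factor Δ₄ ≠ 0 and center X. Then the four-dimensional box integral satisfies D₀(dim=4) = -(1/(2Δ₄))[D₀(dim=6) - T], where D₀(dim=d) = ∫_{simplex} V^{d/2-4} and T = Σ_{i=0}^{3} (X_i - X_{i+1}) ∫_{2-simplex} V^{-1}(contraction i,i+1), with X₀ = 1, X₄ = 0. -/
open Matrix MeasureTheory Set Function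


/-- interval integrability from measurability + bound -/
lemma aux_II {F : ℝ → ℝ} (hm : Measurable F) {a b M : ℝ}
    (hb : ∀ x ∈ Set.uIoc a b, |F x| ≤ M) : IntervalIntegrable F volume a b := by
  rw [intervalIntegrable_iff]
  refine Integrable.mono' (g := fun _ => M) ?_ hm.aestronglyMeasurable ?_
  · exact integrableOn_const measure_Ioc_lt_top.ne
  · exact (ae_restrict_iff' measurableSet_uIoc).2 (ae_of_all _ hb)

/-- measurability of parametric interval integrals -/
lemma aux_meas {α : Type*} [MeasurableSpace α] {φ : α → ℝ → ℝ}
    (hm : Measurable (uncurry φ)) {r s : α → ℝ} (hr : Measurable r) (hs : Measurable s) :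
    Measurable fun p => ∫ y in (r p)..(s p), φ p y := by
  have key : ∀ (u v : α → ℝ), Measurable u → Measurable v →
      Measurable fun p => ∫ y in Ioc (u p) (v p), φ p y := by
    intro u v hu hv
    have h1 : ∀ p, ∫ y in Ioc (u p) (v p), φ p y
        = ∫ y, (Ioc (u p) (v p)).indicator (φ p) y := by
      intro p; rw [integral_indicator measurableSet_Ioc]
    simp_rw [h1]
    apply (StronglyMeasurable.integral_prod_right
      (f := fun p y => (Ioc (u p) (v p)).indicator (φ p) y) ?_).measurable
    apply Measurable.stronglyMeasurable
    have : (uncurry fun p y => (Ioc (u p) (v p)).indicator (φ p) y)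
        = {q : α × ℝ | u q.1 < q.2 ∧ q.2 ≤ v q.1}.indicator (uncurry φ) := by
      funext q
      simp only [uncurry, Set.indicator, mem_Ioc, mem_setOf_eq]
    rw [this]
    exact hm.indicator ((measurableSet_lt (hu.comp measurable_fst) measurable_snd).inter
      (measurableSet_le measurable_snd (hv.comp measurable_fst)))
  simp only [intervalIntegral]
  exact (key r s hr hs).sub (key s r hs hr)


/-- Fubini for a triangle: swap iterated interval integrals. -/
lemma aux_tri_swap {φ : ℝ → ℝ → ℝ} (hm : Measurable (uncurry φ)) {c M : ℝ} (hc : 0 ≤ c)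
    (hb : ∀ x y, 0 ≤ y → y ≤ x → x ≤ c → |φ x y| ≤ M) :
    ∫ x in (0:ℝ)..c, ∫ y in (0:ℝ)..x, φ x y = ∫ y in (0:ℝ)..c, ∫ x in y..c, φ x y := by
  have hM : 0 ≤ M := le_trans (abs_nonneg _) (hb 0 0 le_rfl le_rfl hc)
  set T : Set (ℝ × ℝ) := {p | 0 < p.2 ∧ p.2 ≤ p.1 ∧ p.1 ≤ c} with hT
  have hTm : MeasurableSet T :=
    (measurableSet_lt measurable_const measurable_snd).inter
      ((measurableSet_le measurable_snd measurable_fst).inter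
        (measurableSet_le measurable_fst measurable_const))
  set F : ℝ × ℝ → ℝ := T.indicator (uncurry φ) with hF
  have hFm : Measurable F := hm.indicator hTm
  have hFi : Integrable F (volume.prod volume) := by
    refine Integrable.mono' (g := (Icc (0:ℝ) c ×ˢ Icc (0:ℝ) c).indicator fun _ => M)
      ?_ hFm.aestronglyMeasurable (ae_of_all _ ?_)
    · rw [integrable_indicator_iff (measurableSet_Icc.prod measurableSet_Icc)]
      exact integrableOn_const (isCompact_Icc.prod isCompact_Icc).measure_lt_top.ne
    · intro p
      by_cases hp : p ∈ T
      · have hmem : p ∈ Icc (0:ℝ) c ×ˢ Icc (0:ℝ) c :=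
          ⟨⟨le_trans hp.1.le hp.2.1, hp.2.2⟩, ⟨hp.1.le, le_trans hp.2.1 hp.2.2⟩⟩
        rw [hF, indicator_of_mem hp, indicator_of_mem hmem]
        exact hb p.1 p.2 hp.1.le hp.2.1 hp.2.2
      · rw [hF, indicator_of_notMem hp]
        simp only [norm_zero]
        exact Set.indicator_nonneg (fun _ _ => hM) _
  have key := integral_integral_swap (f := fun x y => F (x, y)) (by exact hFi)
  have hL : (∫ x in (0:ℝ)..c, ∫ y in (0:ℝ)..x, φ x y) = ∫ (x : ℝ), ∫ (y : ℝ), F (x, y) := by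
    rw [intervalIntegral.integral_of_le hc]
    have step1 : (∫ x in Ioc (0:ℝ) c, (∫ y in (0:ℝ)..x, φ x y))
        = ∫ x in Ioc (0:ℝ) c, ∫ (y : ℝ), F (x, y) := by
      refine setIntegral_congr_fun measurableSet_Ioc fun x hx => ?_
      rw [intervalIntegral.integral_of_le hx.1.le,
        ← integral_indicator (measurableSet_Ioc (a := (0:ℝ)) (b := x))]
      congr 1; funext y
      by_cases hy : y ∈ Ioc (0:ℝ) x
      · rw [indicator_of_mem hy, hF, indicator_of_mem (show (x,y) ∈ T from ⟨hy.1, hy.2, hx.2⟩)]; rfl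
      · rw [indicator_of_notMem hy, hF, indicator_of_notMem]
        intro hmem; exact hy ⟨hmem.1, hmem.2.1⟩
    rw [step1]
    refine setIntegral_eq_integral_of_forall_compl_eq_zero fun x hx => ?_
    have : ∀ y, F (x, y) = 0 := by
      intro y; rw [hF, indicator_of_notMem]
      intro hmem
      exact hx ⟨lt_of_lt_of_le hmem.1 hmem.2.1, hmem.2.2⟩
    simp only [this, integral_zero]
  have hR : (∫ y in (0:ℝ)..c, ∫ x in y..c, φ x y) = ∫ (y : ℝ), ∫ (x : ℝ), F (x, y) := by
    rw [intervalIntegral.integral_of_le hc]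
    have step1 : (∫ y in Ioc (0:ℝ) c, (∫ x in y..c, φ x y))
        = ∫ y in Ioc (0:ℝ) c, ∫ (x : ℝ), F (x, y) := by
      refine setIntegral_congr_fun measurableSet_Ioc fun y hy => ?_
      rw [intervalIntegral.integral_of_le hy.2, ← integral_Icc_eq_integral_Ioc,
        ← integral_indicator (measurableSet_Icc (a := y) (b := c))]
      congr 1; funext x
      by_cases hx : x ∈ Icc y c
      · rw [indicator_of_mem hx, hF, indicator_of_mem (show (x,y) ∈ T from ⟨hy.1, hx.1, hx.2⟩)]; rfl
      · rw [indicator_of_notMem hx, hF, indicator_of_notMem]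
        intro hmem; exact hx ⟨hmem.2.1, hmem.2.2⟩
    rw [step1]
    refine setIntegral_eq_integral_of_forall_compl_eq_zero fun y hy => ?_
    have : ∀ x, F (x, y) = 0 := by
      intro x; rw [hF, indicator_of_notMem]
      intro hmem
      exact hy ⟨hmem.1, le_trans hmem.2.1 hmem.2.2⟩
    simp only [this, integral_zero]
  rw [hL, hR, key]

/-- Fubini for a rectangle: swap iterated interval integrals. -/
lemma aux_rect_swap {φ : ℝ → ℝ → ℝ} (hm : Measurable (uncurry φ)) {a b a' b' M : ℝ}
    (h1 : a ≤ b) (h2 : a' ≤ b')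
    (hb : ∀ x y, a ≤ x → x ≤ b → a' ≤ y → y ≤ b' → |φ x y| ≤ M) :
    ∫ x in a..b, ∫ y in a'..b', φ x y = ∫ y in a'..b', ∫ x in a..b, φ x y := by
  set T : Set (ℝ × ℝ) := Ioc a b ×ˢ Ioc a' b' with hT
  have hTm : MeasurableSet T := measurableSet_Ioc.prod measurableSet_Ioc
  set F : ℝ × ℝ → ℝ := T.indicator (uncurry φ) with hF
  have hFm : Measurable F := hm.indicator hTm
  have hM : 0 ≤ M := le_trans (abs_nonneg _) (hb a a' le_rfl h1 le_rfl h2)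
  have hFi : Integrable F (volume.prod volume) := by
    refine Integrable.mono' (g := (Icc a b ×ˢ Icc a' b').indicator fun _ => M)
      ?_ hFm.aestronglyMeasurable (ae_of_all _ ?_)
    · rw [integrable_indicator_iff (measurableSet_Icc.prod measurableSet_Icc)]
      exact integrableOn_const (isCompact_Icc.prod isCompact_Icc).measure_lt_top.ne
    · intro p
      by_cases hp : p ∈ T
      · obtain ⟨hp1, hp2⟩ := Set.mem_prod.1 hp
        have hmem : p ∈ Icc a b ×ˢ Icc a' b' :=
          Set.mem_prod.2 ⟨⟨hp1.1.le, hp1.2⟩, ⟨hp2.1.le, hp2.2⟩⟩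
        rw [hF, indicator_of_mem hp, indicator_of_mem hmem]
        exact hb p.1 p.2 hp1.1.le hp1.2 hp2.1.le hp2.2
      · rw [hF, indicator_of_notMem hp]
        simp only [norm_zero]
        exact Set.indicator_nonneg (fun _ _ => hM) _
  have key := integral_integral_swap (f := fun x y => F (x, y)) (by exact hFi)
  have hL : (∫ x in a..b, ∫ y in a'..b', φ x y) = ∫ (x : ℝ), ∫ (y : ℝ), F (x, y) := by
    rw [intervalIntegral.integral_of_le h1]
    have step1 : (∫ x in Ioc a b, (∫ y in a'..b', φ x y))
        = ∫ x in Ioc a b, ∫ (y : ℝ), F (x, y) := by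
      refine setIntegral_congr_fun measurableSet_Ioc fun x hx => ?_
      rw [intervalIntegral.integral_of_le h2,
        ← integral_indicator (measurableSet_Ioc (a := a') (b := b'))]
      congr 1; funext y
      by_cases hy : y ∈ Ioc a' b'
      · rw [indicator_of_mem hy, hF, indicator_of_mem (show (x,y) ∈ T from Set.mem_prod.2 ⟨hx, hy⟩)]; rfl
      · rw [indicator_of_notMem hy, hF, indicator_of_notMem]
        intro hmem; exact hy (Set.mem_prod.1 hmem).2
    rw [step1]
    refine setIntegral_eq_integral_of_forall_compl_eq_zero fun x hx => ?_
    have : ∀ y, F (x, y) = 0 := by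
      intro y; rw [hF, indicator_of_notMem]; intro hmem; exact hx (Set.mem_prod.1 hmem).1
    simp only [this, integral_zero]
  have hR : (∫ y in a'..b', ∫ x in a..b, φ x y) = ∫ (y : ℝ), ∫ (x : ℝ), F (x, y) := by
    rw [intervalIntegral.integral_of_le h2]
    have step1 : (∫ y in Ioc a' b', (∫ x in a..b, φ x y))
        = ∫ y in Ioc a' b', ∫ (x : ℝ), F (x, y) := by
      refine setIntegral_congr_fun measurableSet_Ioc fun y hy => ?_
      rw [intervalIntegral.integral_of_le h1,
        ← integral_indicator (measurableSet_Ioc (a := a) (b := b))]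
      congr 1; funext x
      by_cases hx : x ∈ Ioc a b
      · rw [indicator_of_mem hx, hF, indicator_of_mem (show (x,y) ∈ T from Set.mem_prod.2 ⟨hx, hy⟩)]; rfl
      · rw [indicator_of_notMem hx, hF, indicator_of_notMem]
        intro hmem; exact hx (Set.mem_prod.1 hmem).1
    rw [step1]
    refine setIntegral_eq_integral_of_forall_compl_eq_zero fun y hy => ?_
    have : ∀ x, F (x, y) = 0 := by
      intro x; rw [hF, indicator_of_notMem]; intro hmem; exact hy (Set.mem_prod.1 hmem).2
    simp only [this, integral_zero]
  rw [hL, hR, key]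

lemma aux_sec2 {φ : ℝ × ℝ → ℝ} (hφ : Measurable φ) (x : ℝ) :
    Measurable (fun y => φ (x, y)) :=
  hφ.comp (measurable_const.prodMk measurable_id)

lemma aux_meas2 {φ : ℝ × ℝ → ℝ} (hφ : Measurable φ) :
    Measurable fun x => ∫ y in (0:ℝ)..x, φ (x, y) :=
  aux_meas (φ := fun x y => φ (x, y)) (by exact hφ) measurable_const measurable_id

lemma aux_add2 {φ ψ : ℝ × ℝ → ℝ} (hφ : Measurable φ) (hψ : Measurable ψ) {M : ℝ}
    (hbφ : ∀ x y, 0 ≤ y → y ≤ x → x ≤ 1 → |φ (x, y)| ≤ M)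
    (hbψ : ∀ x y, 0 ≤ y → y ≤ x → x ≤ 1 → |ψ (x, y)| ≤ M) :
    (∫ x in (0:ℝ)..1, ∫ y in (0:ℝ)..x, (φ (x, y) + ψ (x, y)))
      = (∫ x in (0:ℝ)..1, ∫ y in (0:ℝ)..x, φ (x, y))
        + ∫ x in (0:ℝ)..1, ∫ y in (0:ℝ)..x, ψ (x, y) := by
  have hM : 0 ≤ M := le_trans (abs_nonneg _) (hbφ 0 0 le_rfl le_rfl zero_le_one)
  have hIφ : ∀ x, 0 ≤ x → x ≤ 1 → IntervalIntegrable (fun y => φ (x, y)) volume 0 x := by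
    intro x hx0 hx1
    refine aux_II (aux_sec2 hφ x) (M := M) fun y hy => ?_
    rw [Set.uIoc_of_le hx0] at hy
    exact hbφ x y hy.1.le hy.2 hx1
  have hIψ : ∀ x, 0 ≤ x → x ≤ 1 → IntervalIntegrable (fun y => ψ (x, y)) volume 0 x := by
    intro x hx0 hx1
    refine aux_II (aux_sec2 hψ x) (M := M) fun y hy => ?_
    rw [Set.uIoc_of_le hx0] at hy
    exact hbψ x y hy.1.le hy.2 hx1
  have hbint : ∀ (χ : ℝ × ℝ → ℝ), Measurable χ →
      (∀ x y, 0 ≤ y → y ≤ x → x ≤ 1 → |χ (x, y)| ≤ M) →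
      IntervalIntegrable (fun x => ∫ y in (0:ℝ)..x, χ (x, y)) volume 0 1 := by
    intro χ hχ hbχ
    refine aux_II (aux_meas2 hχ) (M := M) fun x hx => ?_
    rw [Set.uIoc_of_le zero_le_one] at hx
    have : ‖∫ y in (0:ℝ)..x, χ (x, y)‖ ≤ M * |x - 0| := by
      refine intervalIntegral.norm_integral_le_of_norm_le_const fun y hy => ?_
      rw [Set.uIoc_of_le hx.1.le] at hy
      rw [Real.norm_eq_abs]
      exact hbχ x y hy.1.le hy.2 hx.2
    rw [Real.norm_eq_abs] at this
    calc |∫ y in (0:ℝ)..x, χ (x, y)| ≤ M * |x - 0| := this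
      _ ≤ M * 1 := by
          refine mul_le_mul_of_nonneg_left ?_ hM
          rw [sub_zero, abs_of_pos hx.1]; exact hx.2
      _ = M := mul_one M
  have step : ∀ x ∈ Set.uIcc (0:ℝ) 1,
      (∫ y in (0:ℝ)..x, (φ (x, y) + ψ (x, y)))
        = (∫ y in (0:ℝ)..x, φ (x, y)) + ∫ y in (0:ℝ)..x, ψ (x, y) := by
    intro x hx
    rw [Set.uIcc_of_le zero_le_one] at hx
    exact intervalIntegral.integral_add (hIφ x hx.1 hx.2) (hIψ x hx.1 hx.2)
  rw [intervalIntegral.integral_congr step]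
  exact intervalIntegral.integral_add (hbint φ hφ hbφ) (hbint ψ hψ hbψ)

lemma aux_meas3' {φ : ℝ × ℝ × ℝ → ℝ} (hφ : Measurable φ) :
    Measurable fun p : ℝ × ℝ => ∫ z in (0:ℝ)..p.2, φ (p.1, p.2, z) :=
  aux_meas (φ := fun (p : ℝ × ℝ) z => φ (p.1, p.2, z))
    (by exact hφ.comp ((measurable_fst.comp measurable_fst).prodMk
      ((measurable_snd.comp measurable_fst).prodMk measurable_snd)))
    measurable_const measurable_snd

lemma aux_inner_bound {φ : ℝ × ℝ × ℝ → ℝ} {M : ℝ}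
    (hb : ∀ x y z, 0 ≤ z → z ≤ y → y ≤ x → x ≤ 1 → |φ (x, y, z)| ≤ M)
    {x y : ℝ} (hy0 : 0 ≤ y) (hyx : y ≤ x) (hx1 : x ≤ 1) :
    |∫ z in (0:ℝ)..y, φ (x, y, z)| ≤ M := by
  have hM : 0 ≤ M := le_trans (abs_nonneg _) (hb 1 0 0 le_rfl le_rfl zero_le_one le_rfl)
  have h1 : ‖∫ z in (0:ℝ)..y, φ (x, y, z)‖ ≤ M * |y - 0| := by
    refine intervalIntegral.norm_integral_le_of_norm_le_const fun z hz => ?_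
    rw [Set.uIoc_of_le hy0] at hz
    rw [Real.norm_eq_abs]
    exact hb x y z hz.1.le hz.2 hyx hx1
  rw [Real.norm_eq_abs] at h1
  calc |∫ z in (0:ℝ)..y, φ (x, y, z)| ≤ M * |y - 0| := h1
    _ ≤ M * 1 := by
        refine mul_le_mul_of_nonneg_left ?_ hM
        rw [sub_zero, abs_of_nonneg hy0]; exact le_trans hyx hx1
    _ = M := mul_one M

lemma aux_add3 {φ ψ : ℝ × ℝ × ℝ → ℝ} (hφ : Measurable φ) (hψ : Measurable ψ) {M : ℝ}
    (hbφ : ∀ x y z, 0 ≤ z → z ≤ y → y ≤ x → x ≤ 1 → |φ (x, y, z)| ≤ M)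
    (hbψ : ∀ x y z, 0 ≤ z → z ≤ y → y ≤ x → x ≤ 1 → |ψ (x, y, z)| ≤ M) :
    (∫ x in (0:ℝ)..1, ∫ y in (0:ℝ)..x, ∫ z in (0:ℝ)..y, (φ (x, y, z) + ψ (x, y, z)))
      = (∫ x in (0:ℝ)..1, ∫ y in (0:ℝ)..x, ∫ z in (0:ℝ)..y, φ (x, y, z))
        + ∫ x in (0:ℝ)..1, ∫ y in (0:ℝ)..x, ∫ z in (0:ℝ)..y, ψ (x, y, z) := by
  have inner : ∀ x ∈ Set.uIcc (0:ℝ) 1, ∀ y ∈ Set.uIcc (0:ℝ) x,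
      (∫ z in (0:ℝ)..y, (φ (x, y, z) + ψ (x, y, z)))
        = (∫ z in (0:ℝ)..y, φ (x, y, z)) + ∫ z in (0:ℝ)..y, ψ (x, y, z) := by
    intro x hx y hy
    rw [Set.uIcc_of_le zero_le_one] at hx
    rw [Set.uIcc_of_le hx.1] at hy
    have key : ∀ (χ : ℝ × ℝ × ℝ → ℝ), Measurable χ →
        (∀ x y z, 0 ≤ z → z ≤ y → y ≤ x → x ≤ 1 → |χ (x, y, z)| ≤ M) →
        IntervalIntegrable (fun z => χ (x, y, z)) volume 0 y := by
      intro χ hχ hbχ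
      refine aux_II (hχ.comp (measurable_const.prodMk
        (measurable_const.prodMk measurable_id))) (M := M) fun z hz => ?_
      rw [Set.uIoc_of_le hy.1] at hz
      exact hbχ x y z hz.1.le hz.2 hy.2 hx.2
    exact intervalIntegral.integral_add (key φ hφ hbφ) (key ψ hψ hbψ)
  have hcong : (∫ x in (0:ℝ)..1, ∫ y in (0:ℝ)..x, ∫ z in (0:ℝ)..y,
      (φ (x, y, z) + ψ (x, y, z)))
      = ∫ x in (0:ℝ)..1, ∫ y in (0:ℝ)..x,
        ((∫ z in (0:ℝ)..y, φ (x, y, z)) + ∫ z in (0:ℝ)..y, ψ (x, y, z)) := by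
    refine intervalIntegral.integral_congr fun x hx => ?_
    exact intervalIntegral.integral_congr fun y hy => inner x hx y hy
  rw [hcong]
  exact aux_add2 (φ := fun p => ∫ z in (0:ℝ)..p.2, φ (p.1, p.2, z))
    (ψ := fun p => ∫ z in (0:ℝ)..p.2, ψ (p.1, p.2, z))
    (aux_meas3' hφ) (aux_meas3' hψ)
    (fun x y hy0 hyx hx1 => aux_inner_bound hbφ hy0 hyx hx1)
    (fun x y hy0 hyx hx1 => aux_inner_bound hbψ hy0 hyx hx1)



/-- The quadratic form of a one-loop box in completed-square form:
`V(x) = (x-X)ᵗ H (x-X) + Δ₄`. -/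
noncomputable def boxV (H : Matrix (Fin 3) (Fin 3) ℝ) (X : Fin 3 → ℝ) (Δ : ℝ)
    (x₁ x₂ x₃ : ℝ) : ℝ :=
  (![x₁, x₂, x₃] - X) ⬝ᵥ (H *ᵥ (![x₁, x₂, x₃] - X)) + Δ

lemma boxV_eq (H : Matrix (Fin 3) (Fin 3) ℝ) (X : Fin 3 → ℝ) (Δ : ℝ) (t u v : ℝ) :
    boxV H X Δ t u v =
      H 0 0 * (t - X 0) ^ 2 + H 1 1 * (u - X 1) ^ 2 + H 2 2 * (v - X 2) ^ 2
        + (H 0 1 + H 1 0) * (t - X 0) * (u - X 1)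
        + (H 0 2 + H 2 0) * (t - X 0) * (v - X 2)
        + (H 1 2 + H 2 1) * (u - X 1) * (v - X 2) + Δ := by
  simp [boxV, dotProduct, Matrix.mulVec, Fin.sum_univ_three]
  ring

lemma boxV_hasDerivAt_1 (H : Matrix (Fin 3) (Fin 3) ℝ) (X : Fin 3 → ℝ) (Δ : ℝ) (t u v : ℝ) :
    HasDerivAt (fun s => boxV H X Δ s u v)
      (2 * H 0 0 * (t - X 0) + (H 0 1 + H 1 0) * (u - X 1) + (H 0 2 + H 2 0) * (v - X 2)) t := by
  have h : (fun s => boxV H X Δ s u v) = fun s =>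
      H 0 0 * (s - X 0) ^ 2
        + (((H 0 1 + H 1 0) * (u - X 1) + (H 0 2 + H 2 0) * (v - X 2)) * (s - X 0)
        + (H 1 1 * (u - X 1) ^ 2 + H 2 2 * (v - X 2) ^ 2
            + (H 1 2 + H 2 1) * (u - X 1) * (v - X 2) + Δ)) := by
    funext s; rw [boxV_eq]; ring
  rw [h]
  have base : HasDerivAt (fun s : ℝ => s - X 0) 1 t := (hasDerivAt_id t).sub_const _
  have h1 := (((base.pow 2).const_mul (H 0 0)).add
    ((base.const_mul ((H 0 1 + H 1 0) * (u - X 1) + (H 0 2 + H 2 0) * (v - X 2))).add_const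
      (H 1 1 * (u - X 1) ^ 2 + H 2 2 * (v - X 2) ^ 2
        + (H 1 2 + H 2 1) * (u - X 1) * (v - X 2) + Δ)))
  refine h1.congr_deriv ?_
  norm_num; ring

lemma boxV_hasDerivAt_2 (H : Matrix (Fin 3) (Fin 3) ℝ) (X : Fin 3 → ℝ) (Δ : ℝ) (t u v : ℝ) :
    HasDerivAt (fun s => boxV H X Δ t s v)
      ((H 0 1 + H 1 0) * (t - X 0) + 2 * H 1 1 * (u - X 1) + (H 1 2 + H 2 1) * (v - X 2)) u := by
  have h : (fun s => boxV H X Δ t s v) = fun s =>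
      H 1 1 * (s - X 1) ^ 2
        + (((H 0 1 + H 1 0) * (t - X 0) + (H 1 2 + H 2 1) * (v - X 2)) * (s - X 1)
        + (H 0 0 * (t - X 0) ^ 2 + H 2 2 * (v - X 2) ^ 2
            + (H 0 2 + H 2 0) * (t - X 0) * (v - X 2) + Δ)) := by
    funext s; rw [boxV_eq]; ring
  rw [h]
  have base : HasDerivAt (fun s : ℝ => s - X 1) 1 u := (hasDerivAt_id u).sub_const _
  have h1 := (((base.pow 2).const_mul (H 1 1)).add
    ((base.const_mul ((H 0 1 + H 1 0) * (t - X 0) + (H 1 2 + H 2 1) * (v - X 2))).add_const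
      (H 0 0 * (t - X 0) ^ 2 + H 2 2 * (v - X 2) ^ 2
        + (H 0 2 + H 2 0) * (t - X 0) * (v - X 2) + Δ)))
  refine h1.congr_deriv ?_
  norm_num; ring

lemma boxV_hasDerivAt_3 (H : Matrix (Fin 3) (Fin 3) ℝ) (X : Fin 3 → ℝ) (Δ : ℝ) (t u v : ℝ) :
    HasDerivAt (fun s => boxV H X Δ t u s)
      ((H 0 2 + H 2 0) * (t - X 0) + (H 1 2 + H 2 1) * (u - X 1) + 2 * H 2 2 * (v - X 2)) v := by
  have h : (fun s => boxV H X Δ t u s) = fun s =>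
      H 2 2 * (s - X 2) ^ 2
        + (((H 0 2 + H 2 0) * (t - X 0) + (H 1 2 + H 2 1) * (u - X 1)) * (s - X 2)
        + (H 0 0 * (t - X 0) ^ 2 + H 1 1 * (u - X 1) ^ 2
            + (H 0 1 + H 1 0) * (t - X 0) * (u - X 1) + Δ)) := by
    funext s; rw [boxV_eq]; ring
  rw [h]
  have base : HasDerivAt (fun s : ℝ => s - X 2) 1 v := (hasDerivAt_id v).sub_const _
  have h1 := (((base.pow 2).const_mul (H 2 2)).add
    ((base.const_mul ((H 0 2 + H 2 0) * (t - X 0) + (H 1 2 + H 2 1) * (u - X 1))).add_const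
      (H 0 0 * (t - X 0) ^ 2 + H 1 1 * (u - X 1) ^ 2
        + (H 0 1 + H 1 0) * (t - X 0) * (u - X 1) + Δ)))
  refine h1.congr_deriv ?_
  norm_num; ring

lemma boxV_continuous (H : Matrix (Fin 3) (Fin 3) ℝ) (X : Fin 3 → ℝ) (Δ : ℝ) :
    Continuous fun p : ℝ × ℝ × ℝ => boxV H X Δ p.1 p.2.1 p.2.2 := by
  have h : (fun p : ℝ × ℝ × ℝ => boxV H X Δ p.1 p.2.1 p.2.2) = fun p : ℝ × ℝ × ℝ =>
      H 0 0 * (p.1 - X 0) ^ 2 + H 1 1 * (p.2.1 - X 1) ^ 2 + H 2 2 * (p.2.2 - X 2) ^ 2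
        + (H 0 1 + H 1 0) * (p.1 - X 0) * (p.2.1 - X 1)
        + (H 0 2 + H 2 0) * (p.1 - X 0) * (p.2.2 - X 2)
        + (H 1 2 + H 2 1) * (p.2.1 - X 1) * (p.2.2 - X 2) + Δ := by
    funext p; rw [boxV_eq]
  rw [h]; fun_prop

lemma boxV_cont3 (H : Matrix (Fin 3) (Fin 3) ℝ) (X : Fin 3 → ℝ) (Δ t u : ℝ) :
    Continuous fun v => boxV H X Δ t u v := by
  have h := (boxV_continuous H X Δ).comp (f := fun v : ℝ => (t, u, v)) (by fun_prop)
  exact h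

lemma boxV_cont2 (H : Matrix (Fin 3) (Fin 3) ℝ) (X : Fin 3 → ℝ) (Δ t v : ℝ) :
    Continuous fun u => boxV H X Δ t u v := by
  have h := (boxV_continuous H X Δ).comp (f := fun u : ℝ => (t, u, v)) (by fun_prop)
  exact h

lemma boxV_cont1 (H : Matrix (Fin 3) (Fin 3) ℝ) (X : Fin 3 → ℝ) (Δ u v : ℝ) :
    Continuous fun t => boxV H X Δ t u v := by
  have h := (boxV_continuous H X Δ).comp (f := fun t : ℝ => (t, u, v)) (by fun_prop)
  exact h

lemma boxV_ftc3 (H : Matrix (Fin 3) (Fin 3) ℝ) (X : Fin 3 → ℝ) (Δ : ℝ) {t u : ℝ}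
    (hu : 0 ≤ u) (hne : ∀ v, 0 ≤ v → v ≤ u → boxV H X Δ t u v ≠ 0) :
    (∫ v in (0:ℝ)..u, ((boxV H X Δ t u v)⁻¹ + (v - X 2) *
        (-((H 0 2 + H 2 0) * (t - X 0) + (H 1 2 + H 2 1) * (u - X 1) + 2 * H 2 2 * (v - X 2))
          / (boxV H X Δ t u v) ^ 2)))
      = (u - X 2) * (boxV H X Δ t u u)⁻¹ - (0 - X 2) * (boxV H X Δ t u 0)⁻¹ := by
  have huIcc : Set.uIcc (0:ℝ) u = Set.Icc 0 u := Set.uIcc_of_le hu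
  refine intervalIntegral.integral_eq_sub_of_hasDerivAt (f := fun v => (v - X 2) *
    (boxV H X Δ t u v)⁻¹) ?_ ?_
  · intro v hv
    rw [huIcc] at hv
    have hval := hne v hv.1 hv.2
    have hinv : HasDerivAt (fun s => (boxV H X Δ t u s)⁻¹)
        (-((H 0 2 + H 2 0) * (t - X 0) + (H 1 2 + H 2 1) * (u - X 1) + 2 * H 2 2 * (v - X 2))
          / (boxV H X Δ t u v) ^ 2) v := (boxV_hasDerivAt_3 H X Δ t u v).inv hval
    have := (((hasDerivAt_id v).sub_const (X 2)).mul hinv)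
    simp only [id_eq] at this
    refine this.congr_deriv ?_
    ring
  · apply ContinuousOn.intervalIntegrable
    rw [huIcc]
    have hVne : ∀ v ∈ Set.Icc (0:ℝ) u, boxV H X Δ t u v ≠ 0 := fun v hv => hne v hv.1 hv.2
    refine ContinuousOn.add ((boxV_cont3 H X Δ t u).continuousOn.inv₀ hVne) ?_
    refine ContinuousOn.mul (by fun_prop) ?_
    exact ContinuousOn.div (by fun_prop) (((boxV_cont3 H X Δ t u).pow 2).continuousOn)
      fun v hv => pow_ne_zero 2 (hVne v hv)

lemma boxV_ftc2 (H : Matrix (Fin 3) (Fin 3) ℝ) (X : Fin 3 → ℝ) (Δ : ℝ) {t v : ℝ}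
    (hvt : v ≤ t) (hne : ∀ u, v ≤ u → u ≤ t → boxV H X Δ t u v ≠ 0) :
    (∫ u in v..t, ((boxV H X Δ t u v)⁻¹ + (u - X 1) *
        (-((H 0 1 + H 1 0) * (t - X 0) + 2 * H 1 1 * (u - X 1) + (H 1 2 + H 2 1) * (v - X 2))
          / (boxV H X Δ t u v) ^ 2)))
      = (t - X 1) * (boxV H X Δ t t v)⁻¹ - (v - X 1) * (boxV H X Δ t v v)⁻¹ := by
  have huIcc : Set.uIcc v t = Set.Icc v t := Set.uIcc_of_le hvt
  refine intervalIntegral.integral_eq_sub_of_hasDerivAt (f := fun u => (u - X 1) *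
    (boxV H X Δ t u v)⁻¹) ?_ ?_
  · intro u hu
    rw [huIcc] at hu
    have hval := hne u hu.1 hu.2
    have hinv : HasDerivAt (fun s => (boxV H X Δ t s v)⁻¹)
        (-((H 0 1 + H 1 0) * (t - X 0) + 2 * H 1 1 * (u - X 1) + (H 1 2 + H 2 1) * (v - X 2))
          / (boxV H X Δ t u v) ^ 2) u := (boxV_hasDerivAt_2 H X Δ t u v).inv hval
    have := (((hasDerivAt_id u).sub_const (X 1)).mul hinv)
    simp only [id_eq] at this
    refine this.congr_deriv ?_
    ring
  · apply ContinuousOn.intervalIntegrable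
    rw [huIcc]
    have hVne : ∀ u ∈ Set.Icc v t, boxV H X Δ t u v ≠ 0 := fun u hu => hne u hu.1 hu.2
    refine ContinuousOn.add ((boxV_cont2 H X Δ t v).continuousOn.inv₀ hVne) ?_
    refine ContinuousOn.mul (by fun_prop) ?_
    exact ContinuousOn.div (by fun_prop) (((boxV_cont2 H X Δ t v).pow 2).continuousOn)
      fun u hu => pow_ne_zero 2 (hVne u hu)

lemma boxV_ftc1 (H : Matrix (Fin 3) (Fin 3) ℝ) (X : Fin 3 → ℝ) (Δ : ℝ) {u v : ℝ}
    (hu1 : u ≤ 1) (hne : ∀ t, u ≤ t → t ≤ 1 → boxV H X Δ t u v ≠ 0) :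
    (∫ t in u..(1:ℝ), ((boxV H X Δ t u v)⁻¹ + (t - X 0) *
        (-(2 * H 0 0 * (t - X 0) + (H 0 1 + H 1 0) * (u - X 1) + (H 0 2 + H 2 0) * (v - X 2))
          / (boxV H X Δ t u v) ^ 2)))
      = (1 - X 0) * (boxV H X Δ 1 u v)⁻¹ - (u - X 0) * (boxV H X Δ u u v)⁻¹ := by
  have huIcc : Set.uIcc u (1:ℝ) = Set.Icc u 1 := Set.uIcc_of_le hu1
  refine intervalIntegral.integral_eq_sub_of_hasDerivAt (f := fun t => (t - X 0) *
    (boxV H X Δ t u v)⁻¹) ?_ ?_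
  · intro t ht
    rw [huIcc] at ht
    have hval := hne t ht.1 ht.2
    have hinv : HasDerivAt (fun s => (boxV H X Δ s u v)⁻¹)
        (-(2 * H 0 0 * (t - X 0) + (H 0 1 + H 1 0) * (u - X 1) + (H 0 2 + H 2 0) * (v - X 2))
          / (boxV H X Δ t u v) ^ 2) t := (boxV_hasDerivAt_1 H X Δ t u v).inv hval
    have := (((hasDerivAt_id t).sub_const (X 0)).mul hinv)
    simp only [id_eq] at this
    refine this.congr_deriv ?_
    ring
  · apply ContinuousOn.intervalIntegrable
    rw [huIcc]
    have hVne : ∀ t ∈ Set.Icc u (1:ℝ), boxV H X Δ t u v ≠ 0 := fun t ht => hne t ht.1 ht.2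
    refine ContinuousOn.add ((boxV_cont1 H X Δ u v).continuousOn.inv₀ hVne) ?_
    refine ContinuousOn.mul (by fun_prop) ?_
    exact ContinuousOn.div (by fun_prop) (((boxV_cont1 H X Δ u v).pow 2).continuousOn)
      fun t ht => pow_ne_zero 2 (hVne t ht)

lemma boxV_identity (H : Matrix (Fin 3) (Fin 3) ℝ) (X : Fin 3 → ℝ) (Δ : ℝ) {t u v : ℝ}
    (hne : boxV H X Δ t u v ≠ 0) :
    2 * Δ * ((boxV H X Δ t u v) ^ 2)⁻¹ + (boxV H X Δ t u v)⁻¹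
      = ((boxV H X Δ t u v)⁻¹ + (t - X 0) *
          (-(2 * H 0 0 * (t - X 0) + (H 0 1 + H 1 0) * (u - X 1) + (H 0 2 + H 2 0) * (v - X 2))
            / (boxV H X Δ t u v) ^ 2))
        + ((boxV H X Δ t u v)⁻¹ + (u - X 1) *
          (-((H 0 1 + H 1 0) * (t - X 0) + 2 * H 1 1 * (u - X 1) + (H 1 2 + H 2 1) * (v - X 2))
            / (boxV H X Δ t u v) ^ 2))
        + ((boxV H X Δ t u v)⁻¹ + (v - X 2) *
          (-((H 0 2 + H 2 0) * (t - X 0) + (H 1 2 + H 2 1) * (u - X 1) + 2 * H 2 2 * (v - X 2))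
            / (boxV H X Δ t u v) ^ 2)) := by
  have key : (t - X 0) * (2 * H 0 0 * (t - X 0) + (H 0 1 + H 1 0) * (u - X 1)
        + (H 0 2 + H 2 0) * (v - X 2))
      + (u - X 1) * ((H 0 1 + H 1 0) * (t - X 0) + 2 * H 1 1 * (u - X 1)
        + (H 1 2 + H 2 1) * (v - X 2))
      + (v - X 2) * ((H 0 2 + H 2 0) * (t - X 0) + (H 1 2 + H 2 1) * (u - X 1)
        + 2 * H 2 2 * (v - X 2))
      = 2 * boxV H X Δ t u v - 2 * Δ := by
    rw [boxV_eq]; ring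
  set A := boxV H X Δ t u v with hA
  have step : ((A)⁻¹ + (t - X 0) *
          (-(2 * H 0 0 * (t - X 0) + (H 0 1 + H 1 0) * (u - X 1) + (H 0 2 + H 2 0) * (v - X 2))
            / A ^ 2))
        + ((A)⁻¹ + (u - X 1) *
          (-((H 0 1 + H 1 0) * (t - X 0) + 2 * H 1 1 * (u - X 1) + (H 1 2 + H 2 1) * (v - X 2))
            / A ^ 2))
        + ((A)⁻¹ + (v - X 2) *
          (-((H 0 2 + H 2 0) * (t - X 0) + (H 1 2 + H 2 1) * (u - X 1) + 2 * H 2 2 * (v - X 2))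
            / A ^ 2))
      = 3 * A⁻¹ - ((t - X 0) * (2 * H 0 0 * (t - X 0) + (H 0 1 + H 1 0) * (u - X 1)
          + (H 0 2 + H 2 0) * (v - X 2))
        + (u - X 1) * ((H 0 1 + H 1 0) * (t - X 0) + 2 * H 1 1 * (u - X 1)
          + (H 1 2 + H 2 1) * (v - X 2))
        + (v - X 2) * ((H 0 2 + H 2 0) * (t - X 0) + (H 1 2 + H 2 1) * (u - X 1)
          + 2 * H 2 2 * (v - X 2))) * (A ^ 2)⁻¹ := by ring
  rw [step, key]
  field_simp
  ring

/-- Dimension shift for the box: `D₀(4) = -(1/(2Δ₄)) (D₀(6) - T)`, where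
`D₀(d) = ∫_simplex V^{d/2-4}` and `T = Σᵢ (Xᵢ - Xᵢ₊₁) ∫ V⁻¹(contraction i,i+1)`
with `X₀ = 1`, `X₄ = 0`. -/
theorem stmt_9 (H : Matrix (Fin 3) (Fin 3) ℝ) (hH : H.IsSymm)
    (X : Fin 3 → ℝ) (Δ : ℝ) (hΔ : Δ ≠ 0)
    (hV : ∀ x₁ x₂ x₃ : ℝ, 0 ≤ x₃ → x₃ ≤ x₂ → x₂ ≤ x₁ → x₁ ≤ 1 →
      boxV H X Δ x₁ x₂ x₃ ≠ 0) :
    (∫ x₁ in (0:ℝ)..1, ∫ x₂ in (0:ℝ)..x₁, ∫ x₃ in (0:ℝ)..x₂,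
        ((boxV H X Δ x₁ x₂ x₃) ^ 2)⁻¹) =
      -(1 / (2 * Δ)) *
        ((∫ x₁ in (0:ℝ)..1, ∫ x₂ in (0:ℝ)..x₁, ∫ x₃ in (0:ℝ)..x₂,
            (boxV H X Δ x₁ x₂ x₃)⁻¹) -
          ((1 - X 0) *
              (∫ y₁ in (0:ℝ)..1, ∫ y₂ in (0:ℝ)..y₁, (boxV H X Δ 1 y₁ y₂)⁻¹) +
            (X 0 - X 1) *
              (∫ y₁ in (0:ℝ)..1, ∫ y₂ in (0:ℝ)..y₁, (boxV H X Δ y₁ y₁ y₂)⁻¹) +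
            (X 1 - X 2) *
              (∫ y₁ in (0:ℝ)..1, ∫ y₂ in (0:ℝ)..y₁, (boxV H X Δ y₁ y₂ y₂)⁻¹) +
            (X 2 - 0) *
              (∫ y₁ in (0:ℝ)..1, ∫ y₂ in (0:ℝ)..y₁, (boxV H X Δ y₁ y₂ 0)⁻¹))) := by
  -- basic continuity / measurability
  have hVcont := boxV_continuous H X Δ
  have hVmeas : Measurable (fun p : ℝ × ℝ × ℝ => boxV H X Δ p.1 p.2.1 p.2.2) := hVcont.measurable
  -- the compact simplex
  set K : Set (ℝ × ℝ × ℝ) :=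
    {p : ℝ × ℝ × ℝ | 0 ≤ p.2.2 ∧ p.2.2 ≤ p.2.1 ∧ p.2.1 ≤ p.1 ∧ p.1 ≤ 1} with hKdef
  have hKne : ∀ p ∈ K, boxV H X Δ p.1 p.2.1 p.2.2 ≠ 0 := fun p hp =>
    hV p.1 p.2.1 p.2.2 hp.1 hp.2.1 hp.2.2.1 hp.2.2.2
  have hK : IsCompact K := by
    have c1 : Continuous fun p : ℝ × ℝ × ℝ => p.1 := by fun_prop
    have c2 : Continuous fun p : ℝ × ℝ × ℝ => p.2.1 := by fun_prop
    have c3 : Continuous fun p : ℝ × ℝ × ℝ => p.2.2 := by fun_prop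
    refine IsCompact.of_isClosed_subset
      (isCompact_Icc (a := ((0:ℝ), (0:ℝ), (0:ℝ))) (b := ((1:ℝ), (1:ℝ), (1:ℝ)))) ?_ ?_
    · exact (isClosed_le continuous_const c3).inter ((isClosed_le c3 c2).inter
        ((isClosed_le c2 c1).inter (isClosed_le c1 continuous_const)))
    · intro p hp
      obtain ⟨h1, h2, h3, h4⟩ := hp
      simp only [Set.mem_Icc, Prod.le_def]
      refine ⟨⟨by linarith, by linarith, by linarith⟩, ⟨h4, by linarith, by linarith⟩⟩
  have hK2 : IsCompact {p : ℝ × ℝ | 0 ≤ p.2 ∧ p.2 ≤ p.1 ∧ p.1 ≤ 1} := by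
    have c1 : Continuous fun p : ℝ × ℝ => p.1 := by fun_prop
    have c2 : Continuous fun p : ℝ × ℝ => p.2 := by fun_prop
    refine IsCompact.of_isClosed_subset
      (isCompact_Icc (a := ((0:ℝ), (0:ℝ))) (b := ((1:ℝ), (1:ℝ)))) ?_ ?_
    · exact (isClosed_le continuous_const c2).inter ((isClosed_le c2 c1).inter
        (isClosed_le c1 continuous_const))
    · intro p hp
      obtain ⟨h1, h2, h3⟩ := hp
      simp only [Set.mem_Icc, Prod.le_def]
      refine ⟨⟨by linarith, by linarith⟩, ⟨h3, by linarith⟩⟩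
  -- bound extraction helpers
  have bnd3 : ∀ φ : ℝ × ℝ × ℝ → ℝ, ContinuousOn φ K →
      ∃ M, ∀ x y z : ℝ, 0 ≤ z → z ≤ y → y ≤ x → x ≤ 1 → |φ (x, y, z)| ≤ M := by
    intro φ hφ
    obtain ⟨M, hM⟩ := hK.exists_bound_of_continuousOn hφ
    exact ⟨M, fun x y z h1 h2 h3 h4 => by
      simpa [Real.norm_eq_abs] using hM (x, y, z) ⟨h1, h2, h3, h4⟩⟩
  have bnd2 : ∀ φ : ℝ × ℝ → ℝ, ContinuousOn φ {p : ℝ × ℝ | 0 ≤ p.2 ∧ p.2 ≤ p.1 ∧ p.1 ≤ 1} →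
      ∃ M, ∀ x y : ℝ, 0 ≤ y → y ≤ x → x ≤ 1 → |φ (x, y)| ≤ M := by
    intro φ hφ
    obtain ⟨M, hM⟩ := hK2.exists_bound_of_continuousOn hφ
    exact ⟨M, fun x y h1 h2 h3 => by
      simpa [Real.norm_eq_abs] using hM (x, y) ⟨h1, h2, h3⟩⟩
  -- continuity on K of the various integrands
  have hVKne2 : ∀ p ∈ K, (boxV H X Δ p.1 p.2.1 p.2.2) ^ 2 ≠ 0 := fun p hp => pow_ne_zero 2 (hKne p hp)
  have hFcont : ContinuousOn (fun p : ℝ × ℝ × ℝ => (boxV H X Δ p.1 p.2.1 p.2.2)⁻¹) K :=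
    hVcont.continuousOn.inv₀ hKne
  have hQcont : ContinuousOn (fun p : ℝ × ℝ × ℝ => 2 * Δ * ((boxV H X Δ p.1 p.2.1 p.2.2) ^ 2)⁻¹) K :=
    continuousOn_const.mul (((hVcont.pow 2).continuousOn).inv₀ hVKne2)
  have hG1cont : ContinuousOn (fun p : ℝ × ℝ × ℝ => ((boxV H X Δ p.1 p.2.1 p.2.2)⁻¹ + (p.1 - X 0) * (-(2 * H 0 0 * (p.1 - X 0) + (H 0 1 + H 1 0) * (p.2.1 - X 1) + (H 0 2 + H 2 0) * (p.2.2 - X 2)) / (boxV H X Δ p.1 p.2.1 p.2.2) ^ 2))) K :=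
    hFcont.add (ContinuousOn.mul (by fun_prop)
      (ContinuousOn.div (by fun_prop) ((hVcont.pow 2).continuousOn) hVKne2))
  have hG2cont : ContinuousOn (fun p : ℝ × ℝ × ℝ => ((boxV H X Δ p.1 p.2.1 p.2.2)⁻¹ + (p.2.1 - X 1) * (-((H 0 1 + H 1 0) * (p.1 - X 0) + 2 * H 1 1 * (p.2.1 - X 1) + (H 1 2 + H 2 1) * (p.2.2 - X 2)) / (boxV H X Δ p.1 p.2.1 p.2.2) ^ 2))) K :=
    hFcont.add (ContinuousOn.mul (by fun_prop)
      (ContinuousOn.div (by fun_prop) ((hVcont.pow 2).continuousOn) hVKne2))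
  have hG3cont : ContinuousOn (fun p : ℝ × ℝ × ℝ => ((boxV H X Δ p.1 p.2.1 p.2.2)⁻¹ + (p.2.2 - X 2) * (-((H 0 2 + H 2 0) * (p.1 - X 0) + (H 1 2 + H 2 1) * (p.2.1 - X 1) + 2 * H 2 2 * (p.2.2 - X 2)) / (boxV H X Δ p.1 p.2.1 p.2.2) ^ 2))) K :=
    hFcont.add (ContinuousOn.mul (by fun_prop)
      (ContinuousOn.div (by fun_prop) ((hVcont.pow 2).continuousOn) hVKne2))
  -- measurability of the 3d integrands
  have hFmeas : Measurable (fun p : ℝ × ℝ × ℝ => (boxV H X Δ p.1 p.2.1 p.2.2)⁻¹) := hVmeas.inv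
  have hQmeas : Measurable (fun p : ℝ × ℝ × ℝ => 2 * Δ * ((boxV H X Δ p.1 p.2.1 p.2.2) ^ 2)⁻¹) :=
    measurable_const.mul ((hVmeas.pow_const 2).inv)
  have hG1meas : Measurable (fun p : ℝ × ℝ × ℝ => ((boxV H X Δ p.1 p.2.1 p.2.2)⁻¹ + (p.1 - X 0) * (-(2 * H 0 0 * (p.1 - X 0) + (H 0 1 + H 1 0) * (p.2.1 - X 1) + (H 0 2 + H 2 0) * (p.2.2 - X 2)) / (boxV H X Δ p.1 p.2.1 p.2.2) ^ 2))) :=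
    hFmeas.add ((by fun_prop : Measurable fun p : ℝ × ℝ × ℝ => p.1 - X 0).mul
      (((by fun_prop : Continuous fun p : ℝ × ℝ × ℝ =>
        2 * H 0 0 * (p.1 - X 0) + (H 0 1 + H 1 0) * (p.2.1 - X 1) + (H 0 2 + H 2 0) * (p.2.2 - X 2)).measurable.neg).div (hVmeas.pow_const 2)))
  have hG2meas : Measurable (fun p : ℝ × ℝ × ℝ => ((boxV H X Δ p.1 p.2.1 p.2.2)⁻¹ + (p.2.1 - X 1) * (-((H 0 1 + H 1 0) * (p.1 - X 0) + 2 * H 1 1 * (p.2.1 - X 1) + (H 1 2 + H 2 1) * (p.2.2 - X 2)) / (boxV H X Δ p.1 p.2.1 p.2.2) ^ 2))) :=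
    hFmeas.add ((by fun_prop : Measurable fun p : ℝ × ℝ × ℝ => p.2.1 - X 1).mul
      (((by fun_prop : Continuous fun p : ℝ × ℝ × ℝ =>
        (H 0 1 + H 1 0) * (p.1 - X 0) + 2 * H 1 1 * (p.2.1 - X 1) + (H 1 2 + H 2 1) * (p.2.2 - X 2)).measurable.neg).div (hVmeas.pow_const 2)))
  have hG3meas : Measurable (fun p : ℝ × ℝ × ℝ => ((boxV H X Δ p.1 p.2.1 p.2.2)⁻¹ + (p.2.2 - X 2) * (-((H 0 2 + H 2 0) * (p.1 - X 0) + (H 1 2 + H 2 1) * (p.2.1 - X 1) + 2 * H 2 2 * (p.2.2 - X 2)) / (boxV H X Δ p.1 p.2.1 p.2.2) ^ 2))) :=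
    hFmeas.add ((by fun_prop : Measurable fun p : ℝ × ℝ × ℝ => p.2.2 - X 2).mul
      (((by fun_prop : Continuous fun p : ℝ × ℝ × ℝ =>
        (H 0 2 + H 2 0) * (p.1 - X 0) + (H 1 2 + H 2 1) * (p.2.1 - X 1) + 2 * H 2 2 * (p.2.2 - X 2)).measurable.neg).div (hVmeas.pow_const 2)))
  -- bounds
  obtain ⟨Mf, hMf⟩ := bnd3 _ hFcont
  obtain ⟨Mq, hMq⟩ := bnd3 _ hQcont
  obtain ⟨M1, hM1⟩ := bnd3 _ hG1cont
  obtain ⟨M2, hM2⟩ := bnd3 _ hG2cont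
  obtain ⟨M3, hM3⟩ := bnd3 _ hG3cont
  have hM1n : 0 ≤ M1 := le_trans (abs_nonneg _) (hM1 0 0 0 le_rfl le_rfl le_rfl zero_le_one)
  have hM2n : 0 ≤ M2 := le_trans (abs_nonneg _) (hM2 0 0 0 le_rfl le_rfl le_rfl zero_le_one)
  have hM3n : 0 ≤ M3 := le_trans (abs_nonneg _) (hM3 0 0 0 le_rfl le_rfl le_rfl zero_le_one)
  -- continuity of boundary integrands on the 2-simplex
  have hFcomp : ∀ (m : ℝ × ℝ → ℝ × ℝ × ℝ), Continuous m →
      (∀ p : ℝ × ℝ, 0 ≤ p.2 → p.2 ≤ p.1 → p.1 ≤ 1 → m p ∈ K) →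
      ContinuousOn (fun p : ℝ × ℝ => (boxV H X Δ (m p).1 (m p).2.1 (m p).2.2)⁻¹)
        {p : ℝ × ℝ | 0 ≤ p.2 ∧ p.2 ≤ p.1 ∧ p.1 ≤ 1} := by
    intro m hm hmap
    exact hFcont.comp hm.continuousOn (fun p hp => hmap p hp.1 hp.2.1 hp.2.2)
  have hFb1 : ContinuousOn (fun p : ℝ × ℝ => (boxV H X Δ 1 p.1 p.2)⁻¹)
      {p : ℝ × ℝ | 0 ≤ p.2 ∧ p.2 ≤ p.1 ∧ p.1 ≤ 1} :=
    hFcomp (fun p => ((1:ℝ), p.1, p.2)) (by fun_prop)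
      (fun p h1 h2 h3 => ⟨h1, h2, h3, le_rfl⟩)
  have hFb2 : ContinuousOn (fun p : ℝ × ℝ => (boxV H X Δ p.1 p.1 p.2)⁻¹)
      {p : ℝ × ℝ | 0 ≤ p.2 ∧ p.2 ≤ p.1 ∧ p.1 ≤ 1} :=
    hFcomp (fun p => (p.1, p.1, p.2)) (by fun_prop)
      (fun p h1 h2 h3 => ⟨h1, h2, le_rfl, h3⟩)
  have hFb3 : ContinuousOn (fun p : ℝ × ℝ => (boxV H X Δ p.1 p.2 p.2)⁻¹)
      {p : ℝ × ℝ | 0 ≤ p.2 ∧ p.2 ≤ p.1 ∧ p.1 ≤ 1} :=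
    hFcomp (fun p => (p.1, p.2, p.2)) (by fun_prop)
      (fun p h1 h2 h3 => ⟨h1, le_rfl, h2, h3⟩)
  have hFb4 : ContinuousOn (fun p : ℝ × ℝ => (boxV H X Δ p.1 p.2 0)⁻¹)
      {p : ℝ × ℝ | 0 ≤ p.2 ∧ p.2 ≤ p.1 ∧ p.1 ≤ 1} :=
    hFcomp (fun p => (p.1, p.2, (0:ℝ))) (by fun_prop)
      (fun p h1 h2 h3 => ⟨le_rfl, h1, h2, h3⟩)
  -- measurability of boundary integrands
  have hVm1 : Measurable (fun p : ℝ × ℝ => (boxV H X Δ 1 p.1 p.2)⁻¹) :=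
    (hVmeas.comp (f := fun p : ℝ × ℝ => ((1:ℝ), p.1, p.2)) (by fun_prop)).inv
  have hVm2 : Measurable (fun p : ℝ × ℝ => (boxV H X Δ p.1 p.1 p.2)⁻¹) :=
    (hVmeas.comp (f := fun p : ℝ × ℝ => (p.1, p.1, p.2)) (by fun_prop)).inv
  have hVm3 : Measurable (fun p : ℝ × ℝ => (boxV H X Δ p.1 p.2 p.2)⁻¹) :=
    (hVmeas.comp (f := fun p : ℝ × ℝ => (p.1, p.2, p.2)) (by fun_prop)).inv
  have hVm4 : Measurable (fun p : ℝ × ℝ => (boxV H X Δ p.1 p.2 0)⁻¹) :=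
    (hVmeas.comp (f := fun p : ℝ × ℝ => (p.1, p.2, (0:ℝ))) (by fun_prop)).inv
  have mB1 : Measurable (fun p : ℝ × ℝ => (1 - X 0) * (boxV H X Δ 1 p.1 p.2)⁻¹) :=
    measurable_const.mul hVm1
  have mB2 : Measurable (fun p : ℝ × ℝ => -((p.1 - X 0) * (boxV H X Δ p.1 p.1 p.2)⁻¹)) :=
    ((measurable_fst.sub_const (X 0)).mul hVm2).neg
  have mB3 : Measurable (fun p : ℝ × ℝ => (p.1 - X 1) * (boxV H X Δ p.1 p.1 p.2)⁻¹) :=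
    (measurable_fst.sub_const (X 1)).mul hVm2
  have mB4 : Measurable (fun p : ℝ × ℝ => -((p.2 - X 1) * (boxV H X Δ p.1 p.2 p.2)⁻¹)) :=
    ((measurable_snd.sub_const (X 1)).mul hVm3).neg
  have mB5 : Measurable (fun p : ℝ × ℝ => (p.2 - X 2) * (boxV H X Δ p.1 p.2 p.2)⁻¹) :=
    (measurable_snd.sub_const (X 2)).mul hVm3
  have mB6 : Measurable (fun p : ℝ × ℝ => (X 2 - 0) * (boxV H X Δ p.1 p.2 0)⁻¹) :=
    measurable_const.mul hVm4
  -- bounds for boundary integrands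
  obtain ⟨B1, hB1⟩ := bnd2 (fun p : ℝ × ℝ => (1 - X 0) * (boxV H X Δ 1 p.1 p.2)⁻¹)
    (continuousOn_const.mul hFb1)
  obtain ⟨B2, hB2⟩ := bnd2 (fun p : ℝ × ℝ => -((p.1 - X 0) * (boxV H X Δ p.1 p.1 p.2)⁻¹))
    ((ContinuousOn.mul (by fun_prop) hFb2).neg)
  obtain ⟨B3, hB3⟩ := bnd2 (fun p : ℝ × ℝ => (p.1 - X 1) * (boxV H X Δ p.1 p.1 p.2)⁻¹)
    (ContinuousOn.mul (by fun_prop) hFb2)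
  obtain ⟨B4, hB4⟩ := bnd2 (fun p : ℝ × ℝ => -((p.2 - X 1) * (boxV H X Δ p.1 p.2 p.2)⁻¹))
    ((ContinuousOn.mul (by fun_prop) hFb3).neg)
  obtain ⟨B5, hB5⟩ := bnd2 (fun p : ℝ × ℝ => (p.2 - X 2) * (boxV H X Δ p.1 p.2 p.2)⁻¹)
    (ContinuousOn.mul (by fun_prop) hFb3)
  obtain ⟨B6, hB6⟩ := bnd2 (fun p : ℝ × ℝ => (X 2 - 0) * (boxV H X Δ p.1 p.2 0)⁻¹)
    (continuousOn_const.mul hFb4)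
  -- constant-pulling helper
  have pull2 : ∀ (c : ℝ) (φ : ℝ × ℝ → ℝ),
      (∫ x in (0:ℝ)..1, ∫ y in (0:ℝ)..x, c * φ (x, y))
        = c * ∫ x in (0:ℝ)..1, ∫ y in (0:ℝ)..x, φ (x, y) := by
    intro c φ
    rw [← intervalIntegral.integral_const_mul]
    refine intervalIntegral.integral_congr fun x _ => ?_
    rw [intervalIntegral.integral_const_mul]
  -- Step 1 : pull 2Δ inside
  have h2d : 2 * Δ * (∫ x₁ in (0:ℝ)..1, ∫ x₂ in (0:ℝ)..x₁, ∫ x₃ in (0:ℝ)..x₂, ((boxV H X Δ x₁ x₂ x₃) ^ 2)⁻¹) = ∫ x in (0:ℝ)..1, ∫ y in (0:ℝ)..x, ∫ z in (0:ℝ)..y, 2 * Δ * ((boxV H X Δ x y z) ^ 2)⁻¹ := by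
    rw [← intervalIntegral.integral_const_mul]
    refine intervalIntegral.integral_congr fun x _ => ?_
    rw [← intervalIntegral.integral_const_mul]
    refine intervalIntegral.integral_congr fun y _ => ?_
    rw [← intervalIntegral.integral_const_mul]
  -- Step 2 : merge the two triple integrals
  have hsum : (∫ x in (0:ℝ)..1, ∫ y in (0:ℝ)..x, ∫ z in (0:ℝ)..y, 2 * Δ * ((boxV H X Δ x y z) ^ 2)⁻¹) + (∫ x₁ in (0:ℝ)..1, ∫ x₂ in (0:ℝ)..x₁, ∫ x₃ in (0:ℝ)..x₂, (boxV H X Δ x₁ x₂ x₃)⁻¹)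
      = ∫ x in (0:ℝ)..1, ∫ y in (0:ℝ)..x, ∫ z in (0:ℝ)..y, (2 * Δ * ((boxV H X Δ x y z) ^ 2)⁻¹ + (boxV H X Δ x y z)⁻¹) := by
    refine (aux_add3 (φ := fun p : ℝ × ℝ × ℝ => 2 * Δ * ((boxV H X Δ p.1 p.2.1 p.2.2) ^ 2)⁻¹)
      (ψ := fun p : ℝ × ℝ × ℝ => (boxV H X Δ p.1 p.2.1 p.2.2)⁻¹) hQmeas hFmeas
      (M := max Mq Mf) ?_ ?_).symm
    · exact fun x y z h1 h2 h3 h4 => (hMq x y z h1 h2 h3 h4).trans (le_max_left _ _)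
    · exact fun x y z h1 h2 h3 h4 => (hMf x y z h1 h2 h3 h4).trans (le_max_right _ _)
  -- Step 3 : BST pointwise identity
  have hid : (∫ x in (0:ℝ)..1, ∫ y in (0:ℝ)..x, ∫ z in (0:ℝ)..y, (2 * Δ * ((boxV H X Δ x y z) ^ 2)⁻¹ + (boxV H X Δ x y z)⁻¹))
      = ∫ x in (0:ℝ)..1, ∫ y in (0:ℝ)..x, ∫ z in (0:ℝ)..y, (((boxV H X Δ x y z)⁻¹ + (x - X 0) * (-(2 * H 0 0 * (x - X 0) + (H 0 1 + H 1 0) * (y - X 1) + (H 0 2 + H 2 0) * (z - X 2)) / (boxV H X Δ x y z) ^ 2)) + ((boxV H X Δ x y z)⁻¹ + (y - X 1) * (-((H 0 1 + H 1 0) * (x - X 0) + 2 * H 1 1 * (y - X 1) + (H 1 2 + H 2 1) * (z - X 2)) / (boxV H X Δ x y z) ^ 2)) + ((boxV H X Δ x y z)⁻¹ + (z - X 2) * (-((H 0 2 + H 2 0) * (x - X 0) + (H 1 2 + H 2 1) * (y - X 1) + 2 * H 2 2 * (z - X 2)) / (boxV H X Δ x y z) ^ 2))) := by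
    refine intervalIntegral.integral_congr fun x hx => ?_
    rw [Set.uIcc_of_le zero_le_one] at hx
    refine intervalIntegral.integral_congr fun y hy => ?_
    rw [Set.uIcc_of_le hx.1] at hy
    refine intervalIntegral.integral_congr fun z hz => ?_
    rw [Set.uIcc_of_le hy.1] at hz
    exact boxV_identity H X Δ (hV x y z hz.1 hz.2 hy.2 hx.2)
  -- Step 4 : split into three triple integrals
  have hsplit : (∫ x in (0:ℝ)..1, ∫ y in (0:ℝ)..x, ∫ z in (0:ℝ)..y, (((boxV H X Δ x y z)⁻¹ + (x - X 0) * (-(2 * H 0 0 * (x - X 0) + (H 0 1 + H 1 0) * (y - X 1) + (H 0 2 + H 2 0) * (z - X 2)) / (boxV H X Δ x y z) ^ 2)) + ((boxV H X Δ x y z)⁻¹ + (y - X 1) * (-((H 0 1 + H 1 0) * (x - X 0) + 2 * H 1 1 * (y - X 1) + (H 1 2 + H 2 1) * (z - X 2)) / (boxV H X Δ x y z) ^ 2)) + ((boxV H X Δ x y z)⁻¹ + (z - X 2) * (-((H 0 2 + H 2 0) * (x - X 0) + (H 1 2 + H 2 1) * (y - X 1) + 2 * H 2 2 * (z - X 2))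 / (boxV H X Δ x y z) ^ 2))))
      = ((∫ x in (0:ℝ)..1, ∫ y in (0:ℝ)..x, ∫ z in (0:ℝ)..y, ((boxV H X Δ x y z)⁻¹ + (x - X 0) * (-(2 * H 0 0 * (x - X 0) + (H 0 1 + H 1 0) * (y - X 1) + (H 0 2 + H 2 0) * (z - X 2)) / (boxV H X Δ x y z) ^ 2))) + (∫ x in (0:ℝ)..1, ∫ y in (0:ℝ)..x, ∫ z in (0:ℝ)..y, ((boxV H X Δ x y z)⁻¹ + (y - X 1) * (-((H 0 1 + H 1 0) * (x - X 0) + 2 * H 1 1 * (y - X 1) + (H 1 2 + H 2 1) * (z - X 2)) / (boxV H X Δ x y z) ^ 2)))) + (∫ x in (0:ℝ)..1, ∫ y in (0:ℝ)..x, ∫ z in (0:ℝ)..y, ((boxV H X Δ x y z)⁻¹ + (z - X 2) * (-((H 0 2 + H 2 0) * (x - X 0) + (H 1 2 + H 2 1) * (y - X 1) + 2 * H 2 2 * (z - X 2)) / (boxV H X Δ x y z) ^ 2))) := by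
    have e1 := aux_add3 (φ := fun p : ℝ × ℝ × ℝ =>
        ((boxV H X Δ p.1 p.2.1 p.2.2)⁻¹ + (p.1 - X 0) * (-(2 * H 0 0 * (p.1 - X 0) + (H 0 1 + H 1 0) * (p.2.1 - X 1) + (H 0 2 + H 2 0) * (p.2.2 - X 2)) / (boxV H X Δ p.1 p.2.1 p.2.2) ^ 2)) + ((boxV H X Δ p.1 p.2.1 p.2.2)⁻¹ + (p.2.1 - X 1) * (-((H 0 1 + H 1 0) * (p.1 - X 0) + 2 * H 1 1 * (p.2.1 - X 1) + (H 1 2 + H 2 1) * (p.2.2 - X 2)) / (boxV H X Δ p.1 p.2.1 p.2.2) ^ 2)))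
      (ψ := fun p : ℝ × ℝ × ℝ => ((boxV H X Δ p.1 p.2.1 p.2.2)⁻¹ + (p.2.2 - X 2) * (-((H 0 2 + H 2 0) * (p.1 - X 0) + (H 1 2 + H 2 1) * (p.2.1 - X 1) + 2 * H 2 2 * (p.2.2 - X 2)) / (boxV H X Δ p.1 p.2.1 p.2.2) ^ 2)))
      (hG1meas.add hG2meas) hG3meas (M := M1 + M2 + M3)
      (fun x y z h1 h2 h3 h4 => by
        have := (abs_add_le _ _).trans
          (add_le_add (hM1 x y z h1 h2 h3 h4) (hM2 x y z h1 h2 h3 h4))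
        linarith)
      (fun x y z h1 h2 h3 h4 => by have := hM3 x y z h1 h2 h3 h4; linarith)
    have e2 := aux_add3 (φ := fun p : ℝ × ℝ × ℝ => ((boxV H X Δ p.1 p.2.1 p.2.2)⁻¹ + (p.1 - X 0) * (-(2 * H 0 0 * (p.1 - X 0) + (H 0 1 + H 1 0) * (p.2.1 - X 1) + (H 0 2 + H 2 0) * (p.2.2 - X 2)) / (boxV H X Δ p.1 p.2.1 p.2.2) ^ 2)))
      (ψ := fun p : ℝ × ℝ × ℝ => ((boxV H X Δ p.1 p.2.1 p.2.2)⁻¹ + (p.2.1 - X 1) * (-((H 0 1 + H 1 0) * (p.1 - X 0) + 2 * H 1 1 * (p.2.1 - X 1) + (H 1 2 + H 2 1) * (p.2.2 - X 2)) / (boxV H X Δ p.1 p.2.1 p.2.2) ^ 2)))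
      hG1meas hG2meas (M := max M1 M2)
      (fun x y z h1 h2 h3 h4 => (hM1 x y z h1 h2 h3 h4).trans (le_max_left _ _))
      (fun x y z h1 h2 h3 h4 => (hM2 x y z h1 h2 h3 h4).trans (le_max_right _ _))
    rw [e1, e2]
  -- Step A : first triple integral
  have hA1 : (∫ x in (0:ℝ)..1, ∫ y in (0:ℝ)..x, ∫ z in (0:ℝ)..y, ((boxV H X Δ x y z)⁻¹ + (x - X 0) * (-(2 * H 0 0 * (x - X 0) + (H 0 1 + H 1 0) * (y - X 1) + (H 0 2 + H 2 0) * (z - X 2)) / (boxV H X Δ x y z) ^ 2)))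
      = ∫ y in (0:ℝ)..1, ∫ x in y..1, ∫ z in (0:ℝ)..y, ((boxV H X Δ x y z)⁻¹ + (x - X 0) * (-(2 * H 0 0 * (x - X 0) + (H 0 1 + H 1 0) * (y - X 1) + (H 0 2 + H 2 0) * (z - X 2)) / (boxV H X Δ x y z) ^ 2)) := by
    refine aux_tri_swap (φ := fun x y => ∫ z in (0:ℝ)..y, ((boxV H X Δ x y z)⁻¹ + (x - X 0) * (-(2 * H 0 0 * (x - X 0) + (H 0 1 + H 1 0) * (y - X 1) + (H 0 2 + H 2 0) * (z - X 2)) / (boxV H X Δ x y z) ^ 2)))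
      (aux_meas3' hG1meas) zero_le_one (M := M1) ?_
    intro x y h1 h2 h3
    exact aux_inner_bound (φ := fun p : ℝ × ℝ × ℝ => (boxV H X Δ p.1 p.2.1 p.2.2)⁻¹ +
      (p.1 - X 0) * (-(2 * H 0 0 * (p.1 - X 0) + (H 0 1 + H 1 0) * (p.2.1 - X 1)
        + (H 0 2 + H 2 0) * (p.2.2 - X 2)) / (boxV H X Δ p.1 p.2.1 p.2.2) ^ 2))
      hM1 h1 h2 h3
  have hA2 : (∫ y in (0:ℝ)..1, ∫ x in y..1, ∫ z in (0:ℝ)..y, ((boxV H X Δ x y z)⁻¹ + (x - X 0) * (-(2 * H 0 0 * (x - X 0) + (H 0 1 + H 1 0) * (y - X 1) + (H 0 2 + H 2 0) * (z - X 2)) / (boxV H X Δ x y z) ^ 2)))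
      = ∫ x in (0:ℝ)..1, ∫ y in (0:ℝ)..x,
          ((1 - X 0) * (boxV H X Δ 1 x y)⁻¹ + -((x - X 0) * (boxV H X Δ x x y)⁻¹)) := by
    refine intervalIntegral.integral_congr fun y hy => ?_
    rw [Set.uIcc_of_le zero_le_one] at hy
    have hswap := aux_rect_swap (φ := fun x z => ((boxV H X Δ x y z)⁻¹ + (x - X 0) * (-(2 * H 0 0 * (x - X 0) + (H 0 1 + H 1 0) * (y - X 1) + (H 0 2 + H 2 0) * (z - X 2)) / (boxV H X Δ x y z) ^ 2)))
      (hG1meas.comp (f := fun q : ℝ × ℝ => (q.1, y, q.2)) (by fun_prop))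
      hy.2 hy.1 (M := M1)
      (fun x z hx1 hx2 hz1 hz2 => hM1 x y z hz1 hz2 hx1 hx2)
    rw [hswap]
    refine intervalIntegral.integral_congr fun z hz => ?_
    rw [Set.uIcc_of_le hy.1] at hz
    have hne : ∀ t, y ≤ t → t ≤ 1 → boxV H X Δ t y z ≠ 0 :=
      fun t h1 h2 => hV t y z hz.1 hz.2 h1 h2
    rw [boxV_ftc1 H X Δ hy.2 hne]
    ring
  have hA3 : (∫ x in (0:ℝ)..1, ∫ y in (0:ℝ)..x, ((1 - X 0) * (boxV H X Δ 1 x y)⁻¹ + -((x - X 0) * (boxV H X Δ x x y)⁻¹)))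
      = (∫ x in (0:ℝ)..1, ∫ y in (0:ℝ)..x, (1 - X 0) * (boxV H X Δ 1 x y)⁻¹) + (∫ x in (0:ℝ)..1, ∫ y in (0:ℝ)..x, -((x - X 0) * (boxV H X Δ x x y)⁻¹)) := by
    refine aux_add2 (φ := fun p : ℝ × ℝ => (1 - X 0) * (boxV H X Δ 1 p.1 p.2)⁻¹)
      (ψ := fun p : ℝ × ℝ => -((p.1 - X 0) * (boxV H X Δ p.1 p.1 p.2)⁻¹))
      mB1 mB2 (M := max B1 B2) ?_ ?_
    · exact fun x y h1 h2 h3 => (hB1 x y h1 h2 h3).trans (le_max_left _ _)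
    · exact fun x y h1 h2 h3 => (hB2 x y h1 h2 h3).trans (le_max_right _ _)
  have hA4 : (∫ x in (0:ℝ)..1, ∫ y in (0:ℝ)..x, (1 - X 0) * (boxV H X Δ 1 x y)⁻¹) = (1 - X 0) * (∫ y₁ in (0:ℝ)..1, ∫ y₂ in (0:ℝ)..y₁, (boxV H X Δ 1 y₁ y₂)⁻¹) :=
    pull2 (1 - X 0) (fun p : ℝ × ℝ => (boxV H X Δ 1 p.1 p.2)⁻¹)
  -- Step B : second triple integral
  have hBB : (∫ x in (0:ℝ)..1, ∫ y in (0:ℝ)..x, ∫ z in (0:ℝ)..y, ((boxV H X Δ x y z)⁻¹ + (y - X 1) * (-((H 0 1 + H 1 0) * (x - X 0) + 2 * H 1 1 * (y - X 1) + (H 1 2 + H 2 1) * (z - X 2)) / (boxV H X Δ x y z) ^ 2)))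
      = ∫ x in (0:ℝ)..1, ∫ y in (0:ℝ)..x,
          ((x - X 1) * (boxV H X Δ x x y)⁻¹ + -((y - X 1) * (boxV H X Δ x y y)⁻¹)) := by
    refine intervalIntegral.integral_congr fun x hx => ?_
    rw [Set.uIcc_of_le zero_le_one] at hx
    have hswap := aux_tri_swap (φ := fun y z => ((boxV H X Δ x y z)⁻¹ + (y - X 1) * (-((H 0 1 + H 1 0) * (x - X 0) + 2 * H 1 1 * (y - X 1) + (H 1 2 + H 2 1) * (z - X 2)) / (boxV H X Δ x y z) ^ 2)))
      (hG2meas.comp (f := fun q : ℝ × ℝ => (x, q.1, q.2)) (by fun_prop))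
      hx.1 (M := M2)
      (fun y z h1 h2 h3 => hM2 x y z h1 h2 h3 hx.2)
    rw [hswap]
    refine intervalIntegral.integral_congr fun z hz => ?_
    rw [Set.uIcc_of_le hx.1] at hz
    have hne : ∀ u, z ≤ u → u ≤ x → boxV H X Δ x u z ≠ 0 :=
      fun u h1 h2 => hV x u z hz.1 h1 h2 hx.2
    rw [boxV_ftc2 H X Δ hz.2 hne]
    ring
  have hB3' : (∫ x in (0:ℝ)..1, ∫ y in (0:ℝ)..x, ((x - X 1) * (boxV H X Δ x x y)⁻¹ + -((y - X 1) * (boxV H X Δ x y y)⁻¹)))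
      = (∫ x in (0:ℝ)..1, ∫ y in (0:ℝ)..x, (x - X 1) * (boxV H X Δ x x y)⁻¹) + (∫ x in (0:ℝ)..1, ∫ y in (0:ℝ)..x, -((y - X 1) * (boxV H X Δ x y y)⁻¹)) := by
    refine aux_add2 (φ := fun p : ℝ × ℝ => (p.1 - X 1) * (boxV H X Δ p.1 p.1 p.2)⁻¹)
      (ψ := fun p : ℝ × ℝ => -((p.2 - X 1) * (boxV H X Δ p.1 p.2 p.2)⁻¹))
      mB3 mB4 (M := max B3 B4) ?_ ?_
    · exact fun x y h1 h2 h3 => (hB3 x y h1 h2 h3).trans (le_max_left _ _)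
    · exact fun x y h1 h2 h3 => (hB4 x y h1 h2 h3).trans (le_max_right _ _)
  -- Step C : third triple integral
  have hCC : (∫ x in (0:ℝ)..1, ∫ y in (0:ℝ)..x, ∫ z in (0:ℝ)..y, ((boxV H X Δ x y z)⁻¹ + (z - X 2) * (-((H 0 2 + H 2 0) * (x - X 0) + (H 1 2 + H 2 1) * (y - X 1) + 2 * H 2 2 * (z - X 2)) / (boxV H X Δ x y z) ^ 2)))
      = ∫ x in (0:ℝ)..1, ∫ y in (0:ℝ)..x,
          ((y - X 2) * (boxV H X Δ x y y)⁻¹ + (X 2 - 0) * (boxV H X Δ x y 0)⁻¹) := by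
    refine intervalIntegral.integral_congr fun x hx => ?_
    rw [Set.uIcc_of_le zero_le_one] at hx
    refine intervalIntegral.integral_congr fun y hy => ?_
    rw [Set.uIcc_of_le hx.1] at hy
    have hne : ∀ v, 0 ≤ v → v ≤ y → boxV H X Δ x y v ≠ 0 :=
      fun v h1 h2 => hV x y v h1 h2 hy.2 hx.2
    rw [boxV_ftc3 H X Δ hy.1 hne]
    ring
  have hC3 : (∫ x in (0:ℝ)..1, ∫ y in (0:ℝ)..x, ((y - X 2) * (boxV H X Δ x y y)⁻¹ + (X 2 - 0) * (boxV H X Δ x y 0)⁻¹))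
      = (∫ x in (0:ℝ)..1, ∫ y in (0:ℝ)..x, (y - X 2) * (boxV H X Δ x y y)⁻¹) + (∫ x in (0:ℝ)..1, ∫ y in (0:ℝ)..x, (X 2 - 0) * (boxV H X Δ x y 0)⁻¹) := by
    refine aux_add2 (φ := fun p : ℝ × ℝ => (p.2 - X 2) * (boxV H X Δ p.1 p.2 p.2)⁻¹)
      (ψ := fun p : ℝ × ℝ => (X 2 - 0) * (boxV H X Δ p.1 p.2 0)⁻¹)
      mB5 mB6 (M := max B5 B6) ?_ ?_
    · exact fun x y h1 h2 h3 => (hB5 x y h1 h2 h3).trans (le_max_left _ _)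
    · exact fun x y h1 h2 h3 => (hB6 x y h1 h2 h3).trans (le_max_right _ _)
  have hC4 : (∫ x in (0:ℝ)..1, ∫ y in (0:ℝ)..x, (X 2 - 0) * (boxV H X Δ x y 0)⁻¹) = (X 2 - 0) * (∫ y₁ in (0:ℝ)..1, ∫ y₂ in (0:ℝ)..y₁, (boxV H X Δ y₁ y₂ 0)⁻¹) :=
    pull2 (X 2 - 0) (fun p : ℝ × ℝ => (boxV H X Δ p.1 p.2 0)⁻¹)
  -- combining the middle boundary terms
  have hT2 : (∫ x in (0:ℝ)..1, ∫ y in (0:ℝ)..x, -((x - X 0) * (boxV H X Δ x x y)⁻¹)) + (∫ x in (0:ℝ)..1, ∫ y in (0:ℝ)..x, (x - X 1) * (boxV H X Δ x x y)⁻¹) = (X 0 - X 1) * (∫ y₁ in (0:ℝ)..1, ∫ y₂ in (0:ℝ)..y₁, (boxV H X Δ y₁ y₁ y₂)⁻¹) := by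
    have hadd := aux_add2 (φ := fun p : ℝ × ℝ => -((p.1 - X 0) * (boxV H X Δ p.1 p.1 p.2)⁻¹))
      (ψ := fun p : ℝ × ℝ => (p.1 - X 1) * (boxV H X Δ p.1 p.1 p.2)⁻¹)
      mB2 mB3 (M := max B2 B3)
      (fun x y h1 h2 h3 => (hB2 x y h1 h2 h3).trans (le_max_left _ _))
      (fun x y h1 h2 h3 => (hB3 x y h1 h2 h3).trans (le_max_right _ _))
    rw [← hadd]
    have hcong : (∫ x in (0:ℝ)..1, ∫ y in (0:ℝ)..x, (-((x - X 0) * (boxV H X Δ x x y)⁻¹) + (x - X 1) * (boxV H X Δ x x y)⁻¹))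
        = ∫ x in (0:ℝ)..1, ∫ y in (0:ℝ)..x, (X 0 - X 1) * (boxV H X Δ x x y)⁻¹ := by
      refine intervalIntegral.integral_congr fun x hx => ?_
      refine intervalIntegral.integral_congr fun y hy => ?_
      ring
    rw [hcong]
    exact pull2 (X 0 - X 1) (fun p : ℝ × ℝ => (boxV H X Δ p.1 p.1 p.2)⁻¹)
  have hT3 : (∫ x in (0:ℝ)..1, ∫ y in (0:ℝ)..x, -((y - X 1) * (boxV H X Δ x y y)⁻¹)) + (∫ x in (0:ℝ)..1, ∫ y in (0:ℝ)..x, (y - X 2) * (boxV H X Δ x y y)⁻¹) = (X 1 - X 2) * (∫ y₁ in (0:ℝ)..1, ∫ y₂ in (0:ℝ)..y₁, (boxV H X Δ y₁ y₂ y₂)⁻¹) := by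
    have hadd := aux_add2 (φ := fun p : ℝ × ℝ => -((p.2 - X 1) * (boxV H X Δ p.1 p.2 p.2)⁻¹))
      (ψ := fun p : ℝ × ℝ => (p.2 - X 2) * (boxV H X Δ p.1 p.2 p.2)⁻¹)
      mB4 mB5 (M := max B4 B5)
      (fun x y h1 h2 h3 => (hB4 x y h1 h2 h3).trans (le_max_left _ _))
      (fun x y h1 h2 h3 => (hB5 x y h1 h2 h3).trans (le_max_right _ _))
    rw [← hadd]
    have hcong : (∫ x in (0:ℝ)..1, ∫ y in (0:ℝ)..x, (-((y - X 1) * (boxV H X Δ x y y)⁻¹) + (y - X 2) * (boxV H X Δ x y y)⁻¹))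
        = ∫ x in (0:ℝ)..1, ∫ y in (0:ℝ)..x, (X 1 - X 2) * (boxV H X Δ x y y)⁻¹ := by
      refine intervalIntegral.integral_congr fun x hx => ?_
      refine intervalIntegral.integral_congr fun y hy => ?_
      ring
    rw [hcong]
    exact pull2 (X 1 - X 2) (fun p : ℝ × ℝ => (boxV H X Δ p.1 p.2 p.2)⁻¹)
  -- assemble the key identity
  have hAfull : (∫ x in (0:ℝ)..1, ∫ y in (0:ℝ)..x, ∫ z in (0:ℝ)..y, ((boxV H X Δ x y z)⁻¹ + (x - X 0) * (-(2 * H 0 0 * (x - X 0) + (H 0 1 + H 1 0) * (y - X 1) + (H 0 2 + H 2 0) * (z - X 2)) / (boxV H X Δ x y z) ^ 2))) = (1 - X 0) * (∫ y₁ in (0:ℝ)..1, ∫ y₂ in (0:ℝ)..y₁, (boxV H X Δ 1 y₁ y₂)⁻¹) + (∫ x in (0:ℝ)..1, ∫ y in (0:ℝ)..x, -((x - X 0) * (boxV H X Δ x x y)⁻¹)) := by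
    rw [hA1, hA2, hA3, hA4]
  have hBfull : (∫ x in (0:ℝ)..1, ∫ y in (0:ℝ)..x, ∫ z in (0:ℝ)..y, ((boxV H X Δ x y z)⁻¹ + (y - X 1) * (-((H 0 1 + H 1 0) * (x - X 0) + 2 * H 1 1 * (y - X 1) + (H 1 2 + H 2 1) * (z - X 2)) / (boxV H X Δ x y z) ^ 2))) = (∫ x in (0:ℝ)..1, ∫ y in (0:ℝ)..x, (x - X 1) * (boxV H X Δ x x y)⁻¹) + (∫ x in (0:ℝ)..1, ∫ y in (0:ℝ)..x, -((y - X 1) * (boxV H X Δ x y y)⁻¹)) := by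
    rw [hBB, hB3']
  have hCfull : (∫ x in (0:ℝ)..1, ∫ y in (0:ℝ)..x, ∫ z in (0:ℝ)..y, ((boxV H X Δ x y z)⁻¹ + (z - X 2) * (-((H 0 2 + H 2 0) * (x - X 0) + (H 1 2 + H 2 1) * (y - X 1) + 2 * H 2 2 * (z - X 2)) / (boxV H X Δ x y z) ^ 2))) = (∫ x in (0:ℝ)..1, ∫ y in (0:ℝ)..x, (y - X 2) * (boxV H X Δ x y y)⁻¹) + (X 2 - 0) * (∫ y₁ in (0:ℝ)..1, ∫ y₂ in (0:ℝ)..y₁, (boxV H X Δ y₁ y₂ 0)⁻¹) := by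
    rw [hCC, hC3, hC4]
  have key : (1 - X 0) * (∫ y₁ in (0:ℝ)..1, ∫ y₂ in (0:ℝ)..y₁, (boxV H X Δ 1 y₁ y₂)⁻¹) + (X 0 - X 1) * (∫ y₁ in (0:ℝ)..1, ∫ y₂ in (0:ℝ)..y₁, (boxV H X Δ y₁ y₁ y₂)⁻¹) + (X 1 - X 2) * (∫ y₁ in (0:ℝ)..1, ∫ y₂ in (0:ℝ)..y₁, (boxV H X Δ y₁ y₂ y₂)⁻¹)
        + (X 2 - 0) * (∫ y₁ in (0:ℝ)..1, ∫ y₂ in (0:ℝ)..y₁, (boxV H X Δ y₁ y₂ 0)⁻¹)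
      = 2 * Δ * (∫ x₁ in (0:ℝ)..1, ∫ x₂ in (0:ℝ)..x₁, ∫ x₃ in (0:ℝ)..x₂, ((boxV H X Δ x₁ x₂ x₃) ^ 2)⁻¹) + (∫ x₁ in (0:ℝ)..1, ∫ x₂ in (0:ℝ)..x₁, ∫ x₃ in (0:ℝ)..x₂, (boxV H X Δ x₁ x₂ x₃)⁻¹) := by
    rw [h2d]
    rw [hsum, hid, hsplit, hAfull, hBfull, hCfull, ← hT2, ← hT3]
    ring
  rw [key]
  field_simp
  ring
end
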